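/- arXiv:math/0511621 — 6 statements merged into one kernel-verified Lean document; each statement's English description precedes it below -/
import Mathlib

section
/- (Quasi-connectivity) Let κ ∈ ℂ with κ ≠ 2, let φ be a Fricke trace map of level κ, and let K ≥ 2. Then the set 𝒞(K) = {X ∈ ℚ̂ : |φ(X)| ≤ K} is connected in the Farey graph: any two elements of 𝒞(K) are joined by a path of Farey edges all of whose vertices lie in 𝒞(K). -/
open Filter Topology

noncomputable section

namespace TWZ

/-- `ℚ̂ = ℚ ∪ {∞}`, modeling essential simple closed curves on the one-holed torus. -/
abbrev QHat := OnePoint ℚ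

/-- `ℝ̂ = ℝ ∪ {∞}`, the circle (one-point compactification of `ℝ`),
modeling the projective lamination space. -/
abbrev RHat := OnePoint ℝ

/-- Numerator of an extended rational, with `∞ = 1/0`. -/
def qnum (x : QHat) : ℤ := @Option.elim ℚ ℤ x 1 Rat.num

/-- Denominator of an extended rational, with `∞ = 1/0`. -/
def qden (x : QHat) : ℤ := @Option.elim ℚ ℤ x 0 (fun q => (q.den : ℤ))

/-- The natural inclusion `ℚ̂ → ℝ̂`. -/
def toRHat (x : QHat) : RHat := @Option.map ℚ ℝ (fun q => (q : ℝ)) x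

/-- Farey neighbors: `p/q` and `r/s` (in lowest terms) with `|ps - qr| = 1`. -/
def FareyNbr (a b : QHat) : Prop := |qnum a * qden b - qnum b * qden a| = 1

/-- A Farey triangle: three pairwise Farey neighbors. -/
def FareyTriangle (x y z : QHat) : Prop := FareyNbr x y ∧ FareyNbr y z ∧ FareyNbr x z

/-- A Fricke trace map of level `κ`: the vertex relation on Farey triangles and
the edge relation on Farey edges with their two opposite vertices. -/
def IsFricke (κ : ℂ) (φ : QHat → ℂ) : Prop :=
  (∀ x y z : QHat, FareyTriangle x y z →
    φ x ^ 2 + φ y ^ 2 + φ z ^ 2 - φ x * φ y * φ z - 2 = κ) ∧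
  (∀ x y z z' : QHat, FareyTriangle x y z → FareyTriangle x y z' → z ≠ z' →
    φ z + φ z' = φ x * φ y)

/-- `lam ∈ ℝ̂` is an end invariant of `φ` : there are `K > 0` and pairwise distinct
`X_n ∈ ℚ̂` with `X_n → lam` and `|φ (X_n)| ≤ K` for all `n`. -/
def IsEndInv (φ : QHat → ℂ) (lam : RHat) : Prop :=
  ∃ K : ℝ, 0 < K ∧ ∃ s : ℕ → QHat, Function.Injective s ∧
    Tendsto (fun n => toRHat (s n)) atTop (nhds lam) ∧
    ∀ n, ‖φ (s n)‖ ≤ K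

/-- The set `ℰ(φ) ⊆ ℝ̂` of end invariants of `φ`. -/
def endInvs (φ : QHat → ℂ) : Set RHat := {lam | IsEndInv φ lam}

/-- `φ` is dihedral: it vanishes on two of the three vertices of some Farey triangle. -/
def IsDihedral (φ : QHat → ℂ) : Prop :=
  ∃ x y z : QHat, FareyTriangle x y z ∧ φ x = 0 ∧ φ y = 0

/-- `φ` is of SU(2) type: all values are real and lie in `[-2, 2]`. -/
def IsSU2Type (φ : QHat → ℂ) : Prop :=
  ∀ x : QHat, ∃ r : ℝ, -2 ≤ r ∧ r ≤ 2 ∧ φ x = r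

/-- `φ` is real: all its values are real. -/
def IsRealMap (φ : QHat → ℂ) : Prop := ∀ x : QHat, ∃ r : ℝ, φ x = r

/-- The extended BQ-conditions on a subset `S ⊆ ℚ̂`: no value on `S` lies in the real
open interval `(-2,2)`, and only finitely many values on `S` have absolute value `≤ 2`. -/
def ExtendedBQ (φ : QHat → ℂ) (S : Set QHat) : Prop :=
  (∀ x ∈ S, ¬ ∃ r : ℝ, -2 < r ∧ r < 2 ∧ φ x = r) ∧
  {x ∈ S | ‖φ x‖ ≤ 2}.Finite

/-- A Cantor subset of `ℝ̂`: nonempty, compact, perfect and totally disconnected. -/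
def IsCantorSet (C : Set RHat) : Prop :=
  C.Nonempty ∧ IsCompact C ∧ Perfect C ∧ IsTotallyDisconnected C

/-- Parity class odd/odd. -/
def classOO : Set QHat := {x | Odd (qnum x) ∧ Odd (qden x)}

/-- Parity class even/odd. -/
def classEO : Set QHat := {x | Even (qnum x) ∧ Odd (qden x)}

/-- Parity class odd/even. -/
def classOE : Set QHat := {x | Odd (qnum x) ∧ Even (qden x)}

/-- `φ` is imaginary: not dihedral, real on one of the three parity classes and
purely imaginary on the other two. -/
def IsImaginary (φ : QHat → ℂ) : Prop :=
  ¬ IsDihedral φ ∧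
  ∃ S ∈ ({classOO, classEO, classOE} : Set (Set QHat)),
    (∀ x ∈ S, (φ x).im = 0) ∧ (∀ x ∉ S, (φ x).re = 0)

/-! ### Auxiliary development for quasi-connectivity -/

/-- Integer-vector model: build an extended rational from an integer vector. -/
def mkQ (v : ℤ × ℤ) : QHat := (if v.2 = 0 then (none : Option ℚ) else (some ((v.1 : ℚ) / (v.2 : ℚ))) : Option ℚ)

/-- Primitive integer vectors. -/
def IsPrim (v : ℤ × ℤ) : Prop := IsCoprime v.1 v.2

/-- Determinant of two integer vectors. -/
def det2 (u v : ℤ × ℤ) : ℤ := u.1 * v.2 - v.1 * u.2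

lemma coprime_natAbs {a b : ℤ} (h : IsCoprime a b) : Nat.Coprime a.natAbs b.natAbs := by
  rw [Int.isCoprime_iff_gcd_eq_one] at h
  exact h

lemma prim_mk_rep (x : QHat) : IsPrim (qnum x, qden x) ∧ mkQ (qnum x, qden x) = x := by
  have h : ∀ y : Option ℚ, IsPrim (qnum y, qden y) ∧ mkQ (qnum y, qden y) = y := by
    intro y
    cases y with
    | none =>
      constructor
      · exact isCoprime_one_left
      · simp [mkQ, qnum, qden]; rfl
    | some q =>
      constructor
      · show IsCoprime q.num (q.den : ℤ)
        rw [Int.isCoprime_iff_gcd_eq_one]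
        exact q.reduced
      · show mkQ (q.num, (q.den : ℤ)) = some q
        rw [mkQ, if_neg (by simp)]
        simp [Rat.num_div_den]; rfl
  exact h x

lemma mk_rep {v : ℤ × ℤ} (hv : IsPrim v) :
    ∃ e : ℤ, (e = 1 ∨ e = -1) ∧ qnum (mkQ v) = e * v.1 ∧ qden (mkQ v) = e * v.2 := by
  rcases lt_trichotomy v.2 0 with h | h | h
  · have hne : v.2 ≠ 0 := by omega
    have hco : Nat.Coprime (-v.1).natAbs (-v.2).natAbs := by
      rw [Int.natAbs_neg, Int.natAbs_neg]; exact coprime_natAbs hv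
    have hpos : (0 : ℤ) < -v.2 := by omega
    have heq : ((v.1 : ℚ) / (v.2 : ℚ)) = (((-v.1 : ℤ) : ℚ) / ((-v.2 : ℤ) : ℚ)) := by
      push_cast; rw [neg_div_neg_eq]
    refine ⟨-1, Or.inr rfl, ?_, ?_⟩
    · simp only [mkQ, if_neg hne]
      show ((v.1 : ℚ) / (v.2 : ℚ)).num = -1 * v.1
      rw [heq, Rat.num_div_eq_of_coprime hpos hco]; ring
    · simp only [mkQ, if_neg hne]
      show (((v.1 : ℚ) / (v.2 : ℚ)).den : ℤ) = -1 * v.2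
      rw [heq, Rat.den_div_eq_of_coprime hpos hco]; ring
  · have h1 : IsUnit v.1 := by
      have := hv
      rw [IsPrim, h, isCoprime_zero_right] at this
      exact this
    rcases Int.isUnit_iff.mp h1 with h2 | h2
    · exact ⟨1, Or.inl rfl, by simp [mkQ, h, qnum, h2], by simp [mkQ, h, qden, h]⟩
    · exact ⟨-1, Or.inr rfl, by simp [mkQ, h, qnum, h2], by simp [mkQ, h, qden, h]⟩
  · have hne : v.2 ≠ 0 := by omega
    refine ⟨1, Or.inl rfl, ?_, ?_⟩
    · simp only [mkQ, if_neg hne]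
      show ((v.1 : ℚ) / (v.2 : ℚ)).num = 1 * v.1
      rw [one_mul]
      exact Rat.num_div_eq_of_coprime h (coprime_natAbs hv)
    · simp only [mkQ, if_neg hne]
      show (((v.1 : ℚ) / (v.2 : ℚ)).den : ℤ) = 1 * v.2
      rw [one_mul]
      exact Rat.den_div_eq_of_coprime h (coprime_natAbs hv)

lemma mkQ_neg (v : ℤ × ℤ) : mkQ (-v) = mkQ v := by
  by_cases h : v.2 = 0
  · simp [mkQ, h]; rfl
  · simp only [mkQ, if_neg h, Prod.fst_neg, Prod.snd_neg]
    rw [if_neg (show ¬(-v.2 = 0) by omega)]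
    push_cast
    rw [neg_div_neg_eq]

lemma prim_of_det {u v : ℤ × ℤ} (h : det2 u v = 1 ∨ det2 u v = -1) : IsPrim v := by
  simp only [det2] at h
  rcases h with h | h
  · exact ⟨-u.2, u.1, by linear_combination h⟩
  · exact ⟨u.2, -u.1, by linear_combination -h⟩

lemma det2_comm (u v : ℤ × ℤ) : det2 u v = -det2 v u := by simp only [det2]; ring

lemma prim_of_det' {u v : ℤ × ℤ} (h : det2 u v = 1 ∨ det2 u v = -1) : IsPrim u := by
  apply prim_of_det (u := v)
  rw [det2_comm v u]
  omega

lemma nbr_of_det {u v : ℤ × ℤ} (hu : IsPrim u) (hv : IsPrim v)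
    (h : det2 u v = 1 ∨ det2 u v = -1) : FareyNbr (mkQ u) (mkQ v) := by
  obtain ⟨e, he, h1, h2⟩ := mk_rep hu
  obtain ⟨f, hf, h3, h4⟩ := mk_rep hv
  unfold FareyNbr
  rw [h1, h2, h3, h4]
  have hh : e * u.1 * (f * v.2) - f * v.1 * (e * u.2) = (e * f) * det2 u v := by
    simp only [det2]; ring
  rw [hh, abs_mul]
  have he1 : |e * f| = 1 := by rcases he with he | he <;> rcases hf with hf | hf <;> simp [he, hf]
  have he2 : |det2 u v| = 1 := by rcases h with h | h <;> simp [h]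
  rw [he1, he2, one_mul]

lemma det2_eq_zero_of_mk_eq {u v : ℤ × ℤ} (hu : IsPrim u) (hv : IsPrim v)
    (h : mkQ u = mkQ v) : det2 u v = 0 := by
  obtain ⟨e, he, h1, h2⟩ := mk_rep hu
  obtain ⟨f, hf, h3, h4⟩ := mk_rep hv
  rw [h] at h1 h2
  rw [h3] at h1; rw [h4] at h2
  have hh : (e * f) * det2 u v = 0 := by
    simp only [det2]; linear_combination (-(f * v.2)) * h1 + (f * v.1) * h2
  rcases he with he | he <;> rcases hf with hf | hf <;> rw [he, hf] at hh <;> omega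

lemma eq_of_det_zero {u v : ℤ × ℤ} (hu : IsPrim u) (hv : IsPrim v) (h : det2 u v = 0) :
    mkQ u = mkQ v := by
  obtain ⟨x, y, hxy⟩ := hu
  set k : ℤ := x * v.1 + y * v.2 with hk
  simp only [det2] at h
  have h1 : v.1 = k * u.1 := by linear_combination (-v.1) * hxy - y * h
  have h2 : v.2 = k * u.2 := by linear_combination (-v.2) * hxy + x * h
  obtain ⟨p, q, hpq⟩ := hv
  have hunit : IsUnit k := by
    refine IsUnit.of_mul_eq_one (p * u.1 + q * u.2) ?_
    linear_combination hpq - p * h1 - q * h2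
  rcases Int.isUnit_iff.mp hunit with h3 | h3
  · rw [h3, one_mul] at h1 h2
    have hvu : v = u := Prod.ext h1 h2
    rw [hvu]
  · rw [h3] at h1 h2
    have hvu : v = -u := Prod.ext (by simpa using h1) (by simpa using h2)
    rw [hvu, mkQ_neg]

/-- The fundamental edge (flip) relation in vector form. -/
lemma edge_rel {κ : ℂ} {φ : QHat → ℂ} (hφ : IsFricke κ φ) {u v : ℤ × ℤ}
    (h : det2 u v = 1 ∨ det2 u v = -1) :
    φ (mkQ (u + v)) + φ (mkQ (u - v)) = φ (mkQ u) * φ (mkQ v) := by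
  have hu : IsPrim u := prim_of_det' h
  have hv : IsPrim v := prim_of_det h
  have h1 : det2 u (u + v) = det2 u v := by
    simp only [det2, Prod.fst_add, Prod.snd_add]; ring
  have h2 : det2 v (u + v) = -det2 u v := by
    simp only [det2, Prod.fst_add, Prod.snd_add]; ring
  have h3 : det2 u (u - v) = -det2 u v := by
    simp only [det2, Prod.fst_sub, Prod.snd_sub]; ring
  have h4 : det2 v (u - v) = -det2 u v := by
    simp only [det2, Prod.fst_sub, Prod.snd_sub]; ring
  have hpp : IsPrim (u + v) := prim_of_det (u := u) (by omega)
  have hpm : IsPrim (u - v) := prim_of_det (u := u) (by omega)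
  have T1 : FareyTriangle (mkQ u) (mkQ v) (mkQ (u + v)) :=
    ⟨nbr_of_det hu hv h, nbr_of_det hv hpp (by omega), nbr_of_det hu hpp (by omega)⟩
  have T2 : FareyTriangle (mkQ u) (mkQ v) (mkQ (u - v)) :=
    ⟨nbr_of_det hu hv h, nbr_of_det hv hpm (by omega), nbr_of_det hu hpm (by omega)⟩
  have hne : mkQ (u + v) ≠ mkQ (u - v) := by
    intro hc
    have h5 := det2_eq_zero_of_mk_eq hpp hpm hc
    have h6 : det2 (u + v) (u - v) = -2 * det2 u v := by
      simp only [det2, Prod.fst_add, Prod.snd_add, Prod.fst_sub, Prod.snd_sub]; ring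
    omega
  exact hφ.2 (mkQ u) (mkQ v) (mkQ (u + v)) (mkQ (u - v)) T1 T2 hne

/-- Key analytic lemma: around a vertex of value `> 2`, two consecutive flips cannot
both fail to increase (unless both neighbours vanish). -/
lemma lemC' {x y z : ℂ} (hx : 2 < ‖x‖) (hy : y ≠ 0)
    (hl : ‖x * y - z‖ ≤ ‖z‖) :
    ‖y‖ < ‖x * z - y‖ := by
  by_contra hcon
  push_neg at hcon
  have hY : 0 < ‖y‖ := norm_pos_iff.mpr hy
  have t1 : ‖x‖ * ‖y‖ ≤ ‖x * y - z‖ + ‖z‖ := by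
    have := norm_add_le (x * y - z) z
    simpa [norm_mul] using this
  have t2 : ‖x‖ * ‖z‖ ≤ ‖x * z - y‖ + ‖y‖ := by
    have := norm_add_le (x * z - y) y
    simpa [norm_mul] using this
  have hZ : 0 ≤ ‖z‖ := norm_nonneg z
  nlinarith [t1, t2, hl, hcon, hx, hY, hZ]

lemma lemMed {K : ℝ} (hK : 2 ≤ K) {A B C D : ℂ} (hrel : A + B = C * D)
    (hC : K < ‖C‖) (hD : K < ‖D‖)
    (hBA : ‖B‖ < ‖A‖) : K < ‖A‖ := by
  have h1 : ‖C‖ * ‖D‖ ≤ ‖A‖ + ‖B‖ := by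
    have := norm_add_le A B
    rw [hrel, norm_mul] at this
    exact this
  nlinarith [h1, hBA, hC, hD, hK]

/-- Farey connectivity within the sublevel set, as a relation. -/
def Conn (φ : QHat → ℂ) (K : ℝ) (a b : QHat) : Prop :=
  ∃ (n : ℕ) (p : ℕ → QHat), p 0 = a ∧ p n = b ∧
    (∀ i < n, FareyNbr (p i) (p (i + 1))) ∧
    (∀ i ≤ n, ‖φ (p i)‖ ≤ K)

lemma conn_of_eq {φ : QHat → ℂ} {K : ℝ} {a b : QHat} (h : a = b)
    (ha : ‖φ a‖ ≤ K) : Conn φ K a b := by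
  refine ⟨0, fun _ => a, rfl, h, ?_, ?_⟩
  · intro i hi; omega
  · intro i _; exact ha

lemma conn_edge {φ : QHat → ℂ} {K : ℝ} {a b : QHat} (hn : FareyNbr a b)
    (ha : ‖φ a‖ ≤ K) (hb : ‖φ b‖ ≤ K) : Conn φ K a b := by
  refine ⟨1, fun i => if i = 0 then a else b, by simp, by simp, ?_, ?_⟩
  · intro i hi
    have : i = 0 := by omega
    subst this
    simpa using hn
  · intro i hi
    rcases Nat.le_one_iff_eq_zero_or_eq_one.mp hi with h | h <;> subst h <;> simpa

lemma conn_trans {φ : QHat → ℂ} {K : ℝ} {a b c : QHat} (h1 : Conn φ K a b)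
    (h2 : Conn φ K b c) : Conn φ K a c := by
  obtain ⟨m, p, hp0, hpm, hpN, hpB⟩ := h1
  obtain ⟨n, q, hq0, hqn, hqN, hqB⟩ := h2
  refine ⟨m + n, fun i => if i ≤ m then p i else q (i - m), by simpa using hp0, ?_, ?_, ?_⟩
  · dsimp only
    by_cases hn0 : n = 0
    · subst hn0
      simp only [Nat.add_zero, if_pos (le_refl m)]
      rw [hpm, ← hq0]; exact hqn
    · rw [if_neg (show ¬ (m + n ≤ m) by omega)]
      have he : m + n - m = n := by omega
      rw [he]; exact hqn
  · intro i hi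
    dsimp only
    rcases lt_trichotomy i m with h | h | h
    · rw [if_pos (show i ≤ m by omega), if_pos (show i + 1 ≤ m by omega)]
      exact hpN i h
    · subst h
      rw [if_pos (le_refl i), if_neg (show ¬ (i + 1 ≤ i) by omega)]
      have he : i + 1 - i = 1 := by omega
      rw [he, hpm, ← hq0]
      exact hqN 0 (by omega)
    · rw [if_neg (show ¬ (i ≤ m) by omega), if_neg (show ¬ (i + 1 ≤ m) by omega)]
      have he : i + 1 - m = (i - m) + 1 := by omega
      rw [he]
      exact hqN (i - m) (by omega)
  · intro i hi
    dsimp only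
    by_cases him : i ≤ m
    · rw [if_pos him]; exact hpB i him
    · rw [if_neg him]; exact hqB (i - m) (by omega)
/-- **Barrier lemma**: if both endpoints of a Farey edge have `|φ| > K ≥ 2` and the
inward opposite vertex dominates the outward one, then every vertex strictly inside
the edge has `|φ| > K`. -/
lemma barrier {κ : ℂ} {φ : QHat → ℂ} (hφ : IsFricke κ φ) {K : ℝ} (hK : 2 ≤ K) :
    ∀ m : ℕ, ∀ P Q w : ℤ × ℤ, ∀ a b : ℤ,
      (det2 P Q = 1 ∨ det2 P Q = -1) →
      K < ‖φ (mkQ P)‖ → K < ‖φ (mkQ Q)‖ →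
      ‖φ (mkQ (P - Q))‖ < ‖φ (mkQ (P + Q))‖ →
      1 ≤ a → 1 ≤ b → IsCoprime a b →
      w = (a * P.1 + b * Q.1, a * P.2 + b * Q.2) →
      a.natAbs + b.natAbs ≤ m →
      K < ‖φ (mkQ w)‖ := by
  intro m
  induction m with
  | zero =>
    intro P Q w a b _ _ _ _ ha hb _ _ hm
    omega
  | succ m IH =>
    intro P Q w a b hdet hP hQ hor ha hb hco hw hm
    have hrel := edge_rel hφ hdet
    have hPQ : K < ‖φ (mkQ (P + Q))‖ := lemMed hK hrel hP hQ hor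
    have hdet1 : det2 P (P + Q) = det2 P Q := by
      simp only [det2, Prod.fst_add, Prod.snd_add]; ring
    have hdet2 : det2 (P + Q) Q = det2 P Q := by
      simp only [det2, Prod.fst_add, Prod.snd_add]; ring
    have hyP : φ (mkQ P) ≠ 0 := by
      intro hc
      rw [hc] at hP
      simp at hP
      linarith
    have hyQ : φ (mkQ Q) ≠ 0 := by
      intro hc
      rw [hc] at hQ
      simp at hQ
      linarith
    rcases lt_trichotomy a b with hab | hab | hab
    · -- R inside (P+Q, Q)
      have hrel2 := edge_rel hφ (show det2 Q (P + Q) = 1 ∨ det2 Q (P + Q) = -1 by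
        rw [det2_comm Q (P + Q), hdet2]; omega)
      have heP : Q - (P + Q) = -P := by
        apply Prod.ext <;> simp [Prod.fst_add, Prod.snd_add, Prod.fst_sub, Prod.snd_sub,
          Prod.fst_neg, Prod.snd_neg] <;> ring
      rw [heP, mkQ_neg] at hrel2
      -- hrel2 : φ (mkQ (Q + (P+Q))) + φ (mkQ P) = φ (mkQ Q) * φ (mkQ (P+Q))
      have hC := lemC' (x := φ (mkQ Q)) (y := φ (mkQ P)) (z := φ (mkQ (P + Q)))
        (by linarith) hyP
        (by
          have hxy : φ (mkQ Q) * φ (mkQ P) - φ (mkQ (P + Q)) = φ (mkQ (P - Q)) := by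
            linear_combination -hrel
          rw [hxy]
          linarith)
      have hzz : φ (mkQ Q) * φ (mkQ (P + Q)) - φ (mkQ P) = φ (mkQ (Q + (P + Q))) := by
        linear_combination -hrel2
      rw [hzz] at hC
      -- apply IH to edge (P+Q, Q) with coefficients a, b - a
      apply IH (P + Q) Q w a (b - a)
      · rw [hdet2]; exact hdet
      · exact hPQ
      · exact hQ
      · have he1 : (P + Q) - Q = P := by
          apply Prod.ext <;> simp [Prod.fst_add, Prod.snd_add, Prod.fst_sub, Prod.snd_sub]
        have he2 : (P + Q) + Q = Q + (P + Q) := by rw [add_comm]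
        rw [he1, he2]
        exact hC
      · exact ha
      · omega
      · obtain ⟨x, y, hxy⟩ := hco
        exact ⟨x + y, y, by linear_combination hxy⟩
      · rw [hw]
        apply Prod.ext <;> simp [Prod.fst_add, Prod.snd_add] <;> ring
      · omega
    · -- a = b : then a = b = 1 and w = P + Q
      have hunit : IsUnit a := by
        rw [← hab] at hco
        exact isCoprime_self.mp hco
      have ha1 : a = 1 := by
        rcases Int.isUnit_iff.mp hunit with h | h
        · exact h
        · omega
      have hwPQ : w = P + Q := by
        rw [hw, ha1, ← hab, ha1]
        apply Prod.ext <;> simp [Prod.fst_add, Prod.snd_add]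
      rw [hwPQ]
      exact hPQ
    · -- R inside (P, P+Q)
      have hrel2 := edge_rel hφ (show det2 P (P + Q) = 1 ∨ det2 P (P + Q) = -1 by
        rw [hdet1]; omega)
      have heP : P - (P + Q) = -Q := by
        apply Prod.ext <;> simp [Prod.fst_add, Prod.snd_add, Prod.fst_sub, Prod.snd_sub,
          Prod.fst_neg, Prod.snd_neg]
      rw [heP, mkQ_neg] at hrel2
      have hC := lemC' (x := φ (mkQ P)) (y := φ (mkQ Q)) (z := φ (mkQ (P + Q)))
        (by linarith) hyQ
        (by
          have hxy : φ (mkQ P) * φ (mkQ Q) - φ (mkQ (P + Q)) = φ (mkQ (P - Q)) := by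
            linear_combination -hrel
          rw [hxy]
          linarith)
      have hzz : φ (mkQ P) * φ (mkQ (P + Q)) - φ (mkQ Q) = φ (mkQ (P + (P + Q))) := by
        linear_combination -hrel2
      rw [hzz] at hC
      apply IH P (P + Q) w (a - b) b
      · rw [hdet1]; exact hdet
      · exact hP
      · exact hPQ
      · rw [heP, mkQ_neg]
        exact hC
      · omega
      · exact hb
      · obtain ⟨x, y, hxy⟩ := hco
        exact ⟨x, x + y, by linear_combination hxy⟩
      · rw [hw]
        apply Prod.ext <;> simp [Prod.fst_add, Prod.snd_add] <;> ring
      · omega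
lemma prim_neg {v : ℤ × ℤ} (h : IsPrim v) : IsPrim (-v) := by
  obtain ⟨x, y, hxy⟩ := h
  exact ⟨-x, -y, by simp only [Prod.fst_neg, Prod.snd_neg]; linear_combination hxy⟩

/-- The inductive step for positive determinant `≥ 2`. -/
lemma stepPos {κ : ℂ} {φ : QHat → ℂ} (hφ : IsFricke κ φ) {K : ℝ} (hK : 2 ≤ K)
    (N : ℕ) (hN : 2 ≤ N)
    (IH : ∀ m : ℕ, m < N → ∀ u w : ℤ × ℤ, IsPrim u → IsPrim w →
      (det2 u w).natAbs = m → ‖φ (mkQ u)‖ ≤ K →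
      ‖φ (mkQ w)‖ ≤ K → Conn φ K (mkQ u) (mkQ w))
    (u w : ℤ × ℤ) (hu : IsPrim u) (hw : IsPrim w) (hdet : det2 u w = (N : ℤ))
    (hbu : ‖φ (mkQ u)‖ ≤ K) (hbw : ‖φ (mkQ w)‖ ≤ K) :
    Conn φ K (mkQ u) (mkQ w) := by
  obtain ⟨x, y, hxy⟩ := hu
  have hu' : IsPrim u := ⟨x, y, hxy⟩
  set s : ℤ × ℤ := (-y, x) with hs
  have hus : u.1 * s.2 - s.1 * u.2 = 1 := by
    show u.1 * x - (-y) * u.2 = 1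
    linear_combination hxy
  set D : ℤ := (N : ℤ) with hD
  have hD2 : 2 ≤ D := by rw [hD]; exact_mod_cast hN
  have hdet' : u.1 * w.2 - w.1 * u.2 = D := hdet
  set c : ℤ := w.1 * s.2 - s.1 * w.2 with hc
  have h1 : w.1 = c * u.1 + D * s.1 := by
    rw [hc]; linear_combination (-w.1) * hxy - y * hdet'
  have h2 : w.2 = c * u.2 + D * s.2 := by
    rw [hc]; linear_combination (-w.2) * hxy + x * hdet'
  have hcop : IsCoprime c D := by
    obtain ⟨p, q, hpq⟩ := hw
    exact ⟨p * u.1 + q * u.2, p * s.1 + q * s.2, by linear_combination hpq - p * h1 - q * h2⟩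
  set n : ℤ := c / D with hn
  set r : ℤ := c % D with hr
  have hcDr : D * n + r = c := Int.mul_ediv_add_emod c D
  have hr0 : 0 ≤ r := Int.emod_nonneg c (by omega)
  have hrD : r < D := Int.emod_lt_of_pos c (by omega)
  have hrne : r ≠ 0 := by
    intro hc0
    have hk : c = D * n := by linear_combination hc0 - hcDr
    obtain ⟨p, q, hpq⟩ := hcop
    have hD1 : D ∣ 1 := ⟨p * n + q, by linear_combination -hpq + p * hk⟩
    have := Int.le_of_dvd one_pos hD1
    omega
  set P : ℤ × ℤ := (n * u.1 + s.1, n * u.2 + s.2) with hP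
  set Q : ℤ × ℤ := ((n + 1) * u.1 + s.1, (n + 1) * u.2 + s.2) with hQ
  have huP : det2 u P = 1 := by
    show u.1 * (n * u.2 + s.2) - (n * u.1 + s.1) * u.2 = 1
    linear_combination hus
  have huQ : det2 u Q = 1 := by
    show u.1 * ((n + 1) * u.2 + s.2) - ((n + 1) * u.1 + s.1) * u.2 = 1
    linear_combination hus
  have hPQ : det2 P Q = -1 := by
    show (n * u.1 + s.1) * ((n + 1) * u.2 + s.2) - ((n + 1) * u.1 + s.1) * (n * u.2 + s.2) = -1
    linear_combination -hus
  have hPw : det2 P w = -r := by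
    show (n * u.1 + s.1) * w.2 - w.1 * (n * u.2 + s.2) = -r
    linear_combination (n * u.1 + s.1) * h2 - (n * u.2 + s.2) * h1 + (n * D - c) * hus + hcDr
  have hQw : det2 Q w = D - r := by
    show ((n + 1) * u.1 + s.1) * w.2 - w.1 * ((n + 1) * u.2 + s.2) = D - r
    linear_combination ((n + 1) * u.1 + s.1) * h2 - ((n + 1) * u.2 + s.2) * h1 +
      ((n + 1) * D - c) * hus + hcDr
  have hprimP : IsPrim P := prim_of_det (u := u) (Or.inl huP)
  have hprimQ : IsPrim Q := prim_of_det (u := u) (Or.inl huQ)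
  by_cases hbP : ‖φ (mkQ P)‖ ≤ K
  · have c1 : Conn φ K (mkQ u) (mkQ P) :=
      conn_edge (nbr_of_det hu' hprimP (Or.inl huP)) hbu hbP
    have c2 : Conn φ K (mkQ P) (mkQ w) := by
      apply IH (det2 P w).natAbs _ P w hprimP hw rfl hbP hbw
      rw [hPw, hD] at *
      omega
    exact conn_trans c1 c2
  by_cases hbQ : ‖φ (mkQ Q)‖ ≤ K
  · have c1 : Conn φ K (mkQ u) (mkQ Q) :=
      conn_edge (nbr_of_det hu' hprimQ (Or.inl huQ)) hbu hbQ
    have c2 : Conn φ K (mkQ Q) (mkQ w) := by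
      apply IH (det2 Q w).natAbs _ Q w hprimQ hw rfl hbQ hbw
      rw [hQw, hD] at *
      omega
    exact conn_trans c1 c2
  exfalso
  push_neg at hbP hbQ
  have hPmQ : P - Q = -u := by
    apply Prod.ext
    · show (n * u.1 + s.1) - ((n + 1) * u.1 + s.1) = -u.1
      ring
    · show (n * u.2 + s.2) - ((n + 1) * u.2 + s.2) = -u.2
      ring
  have hrel := edge_rel hφ (Or.inr hPQ)
  rw [hPmQ, mkQ_neg] at hrel
  have htri : ‖φ (mkQ P)‖ * ‖φ (mkQ Q)‖
      ≤ ‖φ (mkQ (P + Q))‖ + ‖φ (mkQ u)‖ := by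
    have := norm_add_le (φ (mkQ (P + Q))) (φ (mkQ u))
    rw [hrel, norm_mul] at this
    exact this
  have hor : ‖φ (mkQ (P - Q))‖ < ‖φ (mkQ (P + Q))‖ := by
    rw [hPmQ, mkQ_neg]
    nlinarith [htri, hbP, hbQ, hbu, hK]
  have hbar := barrier hφ hK ((D - r).natAbs + r.natAbs) P Q w (D - r) r
    (Or.inr hPQ) hbP hbQ hor (by omega) (by omega)
    (by
      obtain ⟨p, q, hpq⟩ := hcop
      exact ⟨q + p * n, p + (q + p * n), by linear_combination hpq + p * hcDr⟩)
    (by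
      apply Prod.ext
      · show w.1 = (D - r) * P.1 + r * Q.1
        show w.1 = (D - r) * (n * u.1 + s.1) + r * ((n + 1) * u.1 + s.1)
        linear_combination h1 - u.1 * hcDr
      · show w.2 = (D - r) * P.2 + r * Q.2
        show w.2 = (D - r) * (n * u.2 + s.2) + r * ((n + 1) * u.2 + s.2)
        linear_combination h2 - u.2 * hcDr)
    le_rfl
  linarith

/-- Main induction: any two bounded vertices are connected. -/
lemma mainInd {κ : ℂ} {φ : QHat → ℂ} (hφ : IsFricke κ φ) {K : ℝ} (hK : 2 ≤ K) :
    ∀ N : ℕ, ∀ u w : ℤ × ℤ, IsPrim u → IsPrim w → (det2 u w).natAbs = N →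
      ‖φ (mkQ u)‖ ≤ K → ‖φ (mkQ w)‖ ≤ K →
      Conn φ K (mkQ u) (mkQ w) := by
  intro N
  induction N using Nat.strong_induction_on with
  | _ N IH =>
    intro u w hu hw hdet hbu hbw
    rcases Nat.lt_or_ge N 2 with hN | hN
    · interval_cases N
      · have h0 : det2 u w = 0 := by omega
        exact conn_of_eq (eq_of_det_zero hu hw h0) hbu
      · have h1 : det2 u w = 1 ∨ det2 u w = -1 := by omega
        exact conn_edge (nbr_of_det hu hw h1) hbu hbw
    · rcases lt_trichotomy (det2 u w) 0 with hneg | h0 | hpos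
      · have hneg2 : det2 u (-w) = (N : ℤ) := by
          have he : det2 u (-w) = -det2 u w := by
            simp only [det2, Prod.fst_neg, Prod.snd_neg]; ring
          rw [he]
          omega
        have hres := stepPos hφ hK N hN IH u (-w) hu (prim_neg hw) hneg2 hbu
          (by rwa [mkQ_neg])
        rwa [mkQ_neg] at hres
      · omega
      · have hpos2 : det2 u w = (N : ℤ) := by omega
        exact stepPos hφ hK N hN IH u w hu hw hpos2 hbu hbw

/-- **Quasi-connectivity.** For `κ ≠ 2` and `K ≥ 2`, the set
`𝒞(K) = {X ∈ ℚ̂ : |φ(X)| ≤ K}` is connected in the Farey graph: any two of its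
elements are joined by a path of Farey edges whose vertices all lie in `𝒞(K)`. -/
theorem quasi_connectivity (κ : ℂ) (hκ : κ ≠ 2) (φ : QHat → ℂ) (hφ : IsFricke κ φ)
    (K : ℝ) (hK : 2 ≤ K) (a b : QHat)
    (ha : ‖φ a‖ ≤ K) (hb : ‖φ b‖ ≤ K) :
    ∃ (n : ℕ) (p : ℕ → QHat), p 0 = a ∧ p n = b ∧
      (∀ i < n, FareyNbr (p i) (p (i + 1))) ∧
      (∀ i ≤ n, ‖φ (p i)‖ ≤ K) := by
  obtain ⟨hpa, hma⟩ := prim_mk_rep a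
  obtain ⟨hpb, hmb⟩ := prim_mk_rep b
  have h := mainInd hφ hK (det2 (qnum a, qden a) (qnum b, qden b)).natAbs
    (qnum a, qden a) (qnum b, qden b) hpa hpb rfl
    (by rw [hma]; exact ha) (by rw [hmb]; exact hb)
  rw [hma, hmb] at h
  exact h

end TWZ
end
end

section
/- Let x, y, z, y', z' be complex numbers satisfying z + z' = x·y and y + y' = x·z. If |z| ≥ |z'| and |y| ≥ |y'|, then |x| ≤ 2 or (y = 0 and z = 0). -/
open Filter Topology

noncomputable section

namespace TWZ

/-- If `z + z' = x·y`, `y + y' = x·z`, `|z| ≥ |z'|` and `|y| ≥ |y'|`,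
then `|x| ≤ 2` or (`y = 0` and `z = 0`). -/
theorem two_arrows_pointing_out (x y z y' z' : ℂ)
    (h1 : z + z' = x * y) (h2 : y + y' = x * z)
    (hz : ‖z'‖ ≤ ‖z‖) (hy : ‖y'‖ ≤ ‖y‖) :
    ‖x‖ ≤ 2 ∨ (y = 0 ∧ z = 0) := by
  by_cases hy0 : y = 0
  · -- y = 0 forces y' = 0 (since |y'| ≤ 0), so x * z = 0.
    have hy'0 : y' = 0 := by
      have := hy
      simp [hy0] at this
      exact this
    have hxz : x * z = 0 := by rw [← h2, hy0, hy'0, add_zero]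
    rcases mul_eq_zero.mp hxz with hx0 | hz0
    · left; simp [hx0]
    · right; exact ⟨hy0, hz0⟩
  by_cases hz0 : z = 0
  · have hz'0 : z' = 0 := by
      have := hz
      simp [hz0] at this
      exact this
    have hxy : x * y = 0 := by rw [← h1, hz0, hz'0, add_zero]
    rcases mul_eq_zero.mp hxy with hx0 | hy0'
    · left; simp [hx0]
    · exact absurd hy0' hy0
  -- main case: |y| > 0, |z| > 0
  left
  have hyp : 0 < ‖y‖ := by simpa using hy0
  have hzp : 0 < ‖z‖ := by simpa using hz0
  have e1 : ‖x‖ * ‖y‖ ≤ 2 * ‖z‖ := by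
    calc ‖x‖ * ‖y‖ = ‖x * y‖ := (norm_mul _ _).symm
      _ = ‖z + z'‖ := by rw [h1]
      _ ≤ ‖z‖ + ‖z'‖ := norm_add_le _ _
      _ ≤ 2 * ‖z‖ := by linarith
  have e2 : ‖x‖ * ‖z‖ ≤ 2 * ‖y‖ := by
    calc ‖x‖ * ‖z‖ = ‖x * z‖ := (norm_mul _ _).symm
      _ = ‖y + y'‖ := by rw [h2]
      _ ≤ ‖y‖ + ‖y'‖ := norm_add_le _ _
      _ ≤ 2 * ‖y‖ := by linarith
  nlinarith [norm_nonneg x, mul_pos hyp hzp,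
    mul_le_mul e1 e2 (by positivity) (by positivity)]

end TWZ
end
end

section
/- Assume x is not a real number in the interval [−2,2] and x² ≠ κ + 2. Then there exist λ ∈ ℂ with |λ| > 1 and λ + λ⁻¹ = x, and nonzero complex numbers A, B with A·B = (x² − κ − 2)/(x² − 4), such that y(n) = A·λⁿ + B·λ⁻ⁿ for all n ∈ ℤ. In particular, |y(n)| → ∞ (exponentially fast) both as n → +∞ and as n → −∞. -/
open Filter Topology

noncomputable section

namespace TWZ

private lemma exists_lam (x : ℂ) (hx1 : ¬ ∃ r : ℝ, -2 ≤ r ∧ r ≤ 2 ∧ x = (r : ℂ)) :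
    ∃ l : ℂ, 1 < ‖l‖ ∧ l + l⁻¹ = x := by
  obtain ⟨d, hd⟩ : ∃ d : ℂ, d ^ 2 = x ^ 2 - 4 :=
    IsAlgClosed.exists_pow_nat_eq _ zero_lt_two
  set lp : ℂ := (x + d) / 2 with hlp
  set lm : ℂ := (x - d) / 2 with hlm
  have hprod : lp * lm = 1 := by rw [hlp, hlm]; linear_combination (-hd)/4
  have hlpne : lp ≠ 0 := left_ne_zero_of_mul_eq_one hprod
  have hlmne : lm ≠ 0 := right_ne_zero_of_mul_eq_one hprod
  have hinv : lm = lp⁻¹ := eq_inv_of_mul_eq_one_right hprod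
  have hinv' : lp = lm⁻¹ := eq_inv_of_mul_eq_one_right (by rw [mul_comm]; exact hprod)
  have hsum : lp + lp⁻¹ = x := by rw [← hinv, hlp, hlm]; ring
  have hsum' : lm + lm⁻¹ = x := by rw [← hinv', hlm, hlp]; ring
  have key : ∀ l : ℂ, l ≠ 0 → l + l⁻¹ = x → ‖l‖ ≠ 1 := by
    intro l hl0 hs habs
    apply hx1
    have hre := abs_le.mp (habs ▸ Complex.abs_re_le_norm l)
    refine ⟨2 * l.re, by linarith [hre.1], by linarith [hre.2], ?_⟩
    have hconj : l⁻¹ = (starRingEnd ℂ) l := by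
      rw [Complex.inv_def, Complex.normSq_eq_norm_sq, habs]; simp
    rw [← hs, hconj, Complex.add_conj]
  have habsprod : ‖lp‖ * ‖lm‖ = 1 := by
    rw [← norm_mul, hprod, norm_one]
  rcases lt_or_gt_of_ne (key lp hlpne hsum) with h | h
  · refine ⟨lm, ?_, hsum'⟩
    have h0 : 0 < ‖lp‖ := norm_pos_iff.mpr hlpne
    nlinarith
  · exact ⟨lp, h, hsum⟩

/-- Neighbors of `X` when `x ∉ [-2,2]` and `x² ≠ κ + 2`: the values
`y(n)` are `A·λⁿ + B·λ⁻ⁿ` with `|λ| > 1`, `λ + λ⁻¹ = x`, `A, B ≠ 0`,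
`A·B = (x² − κ − 2)/(x² − 4)`, and `|y(n)| → ∞` as `n → ±∞`. -/
theorem neighbors_generic (κ x : ℂ) (y : ℤ → ℂ)
    (hrec : ∀ n : ℤ, y (n + 1) + y (n - 1) = x * y n)
    (hrel : x ^ 2 + y 0 ^ 2 + y 1 ^ 2 - x * y 0 * y 1 - 2 = κ)
    (hx1 : ¬ ∃ r : ℝ, -2 ≤ r ∧ r ≤ 2 ∧ x = (r : ℂ))
    (hx2 : x ^ 2 ≠ κ + 2) :
    ∃ lam A B : ℂ, 1 < ‖lam‖ ∧ lam + lam⁻¹ = x ∧ A ≠ 0 ∧ B ≠ 0 ∧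
      A * B = (x ^ 2 - κ - 2) / (x ^ 2 - 4) ∧
      (∀ n : ℤ, y n = A * lam ^ n + B * lam ^ (-n)) ∧
      Tendsto (fun n : ℕ => ‖y (n : ℤ)‖) atTop atTop ∧
      Tendsto (fun n : ℕ => ‖y (-(n : ℤ))‖) atTop atTop := by
  obtain ⟨l, hl, hlx⟩ := exists_lam x hx1
  have hl0 : l ≠ 0 := by
    intro h; rw [h] at hl; simp at hl; linarith
  obtain ⟨u, hud⟩ : ∃ u : ℂ, u = l⁻¹ := ⟨l⁻¹, rfl⟩
  have hu : l * u = 1 := by rw [hud, mul_inv_cancel₀ hl0]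
  have hlx' : l + u = x := by rw [hud]; exact hlx
  have hln : l - u ≠ 0 := by
    intro h
    have h2 : l = u := by linear_combination h
    have : l * l = 1 := by rw [h2] at hu ⊢; exact hu
    have habs : ‖l‖ * ‖l‖ = 1 := by rw [← norm_mul, this, norm_one]
    nlinarith
  set A : ℂ := (y 1 - u * y 0) / (l - u) with hA
  set B : ℂ := (l * y 0 - y 1) / (l - u) with hB
  have hsq : x ^ 2 - 4 = (l - u) ^ 2 := by
    linear_combination (-(x + l + u)) * hlx' + 4 * hu
  have hx24 : x ^ 2 - 4 ≠ 0 := by rw [hsq]; exact pow_ne_zero 2 hln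
  have hAB' : A * B * (x ^ 2 - 4) = x ^ 2 - κ - 2 := by
    rw [hsq, hA, hB]
    rw [div_mul_div_comm, div_mul_eq_mul_div, div_eq_iff (mul_ne_zero hln hln)]
    linear_combination ((l-u)^2 * y 0 * y 1) * hlx' - ((l-u)^2 * y 0 ^ 2) * hu - (l-u)^2 * hrel
  have hAB : A * B = (x ^ 2 - κ - 2) / (x ^ 2 - 4) := by
    rw [eq_div_iff hx24]; exact hAB'
  have hABne : A * B ≠ 0 := by
    rw [hAB]
    apply div_ne_zero _ hx24
    intro h
    apply hx2
    linear_combination h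
  have hAne : A ≠ 0 := left_ne_zero_of_mul hABne
  have hBne : B ≠ 0 := right_ne_zero_of_mul hABne
  set g : ℤ → ℂ := fun n => A * l ^ n + B * l ^ (-n) with hg
  have hg0 : g 0 = y 0 := by
    simp only [hg, neg_zero, zpow_zero, mul_one, hA, hB]
    rw [← add_div, div_eq_iff hln]; ring
  have hg1 : g 1 = y 1 := by
    simp only [hg, zpow_one, zpow_neg_one, ← hud, hA, hB]
    rw [div_mul_eq_mul_div, div_mul_eq_mul_div, ← add_div, div_eq_iff hln]
    ring
  have hgrec : ∀ n : ℤ, g (n + 1) + g (n - 1) = x * g n := by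
    intro n
    have e1 : l ^ (n + 1) = l ^ n * l := zpow_add_one₀ hl0 n
    have e2 : l ^ (n - 1) = l ^ n * u := by rw [zpow_sub_one₀ hl0, hud]
    have e3 : l ^ (-(n + 1)) = l ^ (-n) * u := by
      rw [show -(n+1) = -n + (-1) by ring, zpow_add₀ hl0, zpow_neg_one, hud]
    have e4 : l ^ (-(n - 1)) = l ^ (-n) * l := by
      rw [show -(n-1) = -n + 1 by ring, zpow_add₀ hl0, zpow_one]
    simp only [hg, e1, e2, e3, e4]
    rw [← hlx']
    linear_combination (A * l ^ n + B * l ^ (-n)) * hu - (A * l ^n) * hu - (B * l ^ (-n)) * hu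
  have key : ∀ n : ℤ, y n = g n ∧ y (n + 1) = g (n + 1) := by
    intro n
    induction n using Int.induction_on with
    | zero => exact ⟨hg0.symm, by rw [zero_add]; exact hg1.symm⟩
    | succ i ih =>
      refine ⟨ih.2, ?_⟩
      have hr := hrec ((i : ℤ) + 1)
      have hgr := hgrec ((i : ℤ) + 1)
      rw [show ((i : ℤ) + 1 - 1) = (i : ℤ) by ring] at hr hgr
      linear_combination hr - hgr - ih.1 + x * ih.2
    | pred i ih =>
      have hr := hrec (-(i : ℤ))
      have hgr := hgrec (-(i : ℤ))
      constructor
      · rw [show (-(i : ℤ) - 1) = -(i:ℤ) - 1 from rfl]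
        linear_combination hr - hgr + x * ih.1 - ih.2
      · rw [show (-(i : ℤ) - 1 + 1) = -(i : ℤ) by ring]
        exact ih.1
  have hy : ∀ n : ℤ, y n = A * l ^ n + B * l ^ (-n) := fun n => (key n).1
  have hlpos : (0:ℝ) < ‖l‖ := lt_trans zero_lt_one hl
  have habs_le : ∀ k : ℤ, ‖l ^ (-k)‖ ≤ 1 → True := fun _ _ => trivial
  have hinvle : ∀ n : ℕ, ‖l ^ (-(n : ℤ))‖ ≤ 1 := by
    intro n
    rw [norm_zpow, zpow_neg, zpow_natCast]
    apply inv_le_one_of_one_le₀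
    exact one_le_pow₀ (le_of_lt hl)
  have habspow : ∀ n : ℕ, ‖l ^ (n : ℤ)‖ = ‖l‖ ^ n := by
    intro n; rw [zpow_natCast, norm_pow]
  -- lower bounds
  have hb1 : ∀ n : ℕ, ‖A‖ * ‖l‖ ^ n - ‖B‖ ≤
      ‖y (n : ℤ)‖ := by
    intro n
    rw [hy]
    have h1 : ‖A * l ^ (n : ℤ)‖ - ‖B * l ^ (-(n : ℤ))‖ ≤
        ‖A * l ^ (n : ℤ) + B * l ^ (-(n : ℤ))‖ := by
      have := norm_sub_norm_le (A * l ^ (n : ℤ)) (-(B * l ^ (-(n : ℤ))))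
      simpa [sub_neg_eq_add] using this
    refine le_trans ?_ h1
    rw [norm_mul, norm_mul, habspow]
    have := mul_le_mul_of_nonneg_left (hinvle n) (norm_nonneg B)
    nlinarith [norm_nonneg B]
  have hb2 : ∀ n : ℕ, ‖B‖ * ‖l‖ ^ n - ‖A‖ ≤
      ‖y (-(n : ℤ))‖ := by
    intro n
    rw [hy]
    have h1 : ‖B * l ^ (-(-(n : ℤ)))‖ - ‖A * l ^ (-(n : ℤ))‖ ≤
        ‖A * l ^ (-(n : ℤ)) + B * l ^ (-(-(n : ℤ)))‖ := by
      have := norm_sub_norm_le (B * l ^ (-(-(n : ℤ)))) (-(A * l ^ (-(n : ℤ))))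
      simpa [sub_neg_eq_add, add_comm] using this
    refine le_trans ?_ h1
    rw [norm_mul, norm_mul, neg_neg, habspow]
    have := mul_le_mul_of_nonneg_left (hinvle n) (norm_nonneg A)
    nlinarith [norm_nonneg A]
  have hT : ∀ C : ℂ, C ≠ 0 → ∀ D : ℝ, Tendsto (fun n : ℕ =>
      ‖C‖ * ‖l‖ ^ n - D) atTop atTop := by
    intro C hC D
    have h1 : Tendsto (fun n : ℕ => ‖l‖ ^ n) atTop atTop :=
      tendsto_pow_atTop_atTop_of_one_lt hl
    have h2 := h1.const_mul_atTop (norm_pos_iff.mpr hC)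
    simpa [sub_eq_add_neg] using tendsto_atTop_add_const_right atTop (-D) h2
  refine ⟨l, A, B, hl, hlx, hAne, hBne, hAB, hy, ?_, ?_⟩
  · exact tendsto_atTop_mono hb1 (hT A hAne _)
  · exact tendsto_atTop_mono hb2 (hT B hBne _)


end TWZ
end
end

section
/- If x = 2, then there is a complex number δ with δ² = κ − 2 such that y(n) = y(0) + n·δ for all n ∈ ℤ. If x = −2, then there is a complex number δ with δ² = κ − 2 such that y(n) = (−1)ⁿ·(y(0) + n·δ) for all n ∈ ℤ. In particular, if κ ≠ 2, then in both cases |y(n)| grows linearly in |n| (and tends to ∞ as n → ±∞). -/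
open Filter Topology

noncomputable section

namespace TWZ

private lemma rec_ext (x : ℂ) (y g : ℤ → ℂ)
    (hy : ∀ n : ℤ, y (n + 1) + y (n - 1) = x * y n)
    (hg : ∀ n : ℤ, g (n + 1) + g (n - 1) = x * g n)
    (h0 : y 0 = g 0) (h1 : y 1 = g 1) : ∀ n : ℤ, y n = g n := by
  have key : ∀ n : ℤ, y n = g n ∧ y (n + 1) = g (n + 1) := by
    intro n
    induction n using Int.induction_on with
    | zero => exact ⟨h0, h1⟩
    | succ k ih =>
      refine ⟨ih.2, ?_⟩
      have hy' := hy (k + 1); have hg' := hg (k + 1)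
      simp only [add_sub_cancel_right] at hy' hg'
      linear_combination hy' - hg' - ih.1 + x * ih.2
    | pred k ih =>
      have hy' := hy (-k); have hg' := hg (-k)
      refine ⟨?_, ?_⟩
      · linear_combination hy' - hg' - ih.2 + x * ih.1
      · simpa using ih.1
  exact fun n => (key n).1

/-- Neighbors of `X` when `x = ±2`: if `x = 2` then
`y(n) = y(0) + nδ` with `δ² = κ − 2`; if `x = −2` then `y(n) = (−1)ⁿ(y(0) + nδ)`
with `δ² = κ − 2`; and if moreover `κ ≠ 2`, then `|y(n)|` grows linearly in `|n|`
and tends to `∞` as `n → ±∞`. -/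
theorem neighbors_parabolic (κ x : ℂ) (y : ℤ → ℂ)
    (hrec : ∀ n : ℤ, y (n + 1) + y (n - 1) = x * y n)
    (hrel : x ^ 2 + y 0 ^ 2 + y 1 ^ 2 - x * y 0 * y 1 - 2 = κ) :
    (x = 2 → ∃ δ : ℂ, δ ^ 2 = κ - 2 ∧ ∀ n : ℤ, y n = y 0 + (n : ℂ) * δ) ∧
    (x = -2 → ∃ δ : ℂ, δ ^ 2 = κ - 2 ∧
      ∀ n : ℤ, y n = (-1) ^ n * (y 0 + (n : ℂ) * δ)) ∧
    (κ ≠ 2 → (x = 2 ∨ x = -2) →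
      (∃ c : ℝ, 0 < c ∧ ∃ C : ℝ, ∀ n : ℤ, c * |(n : ℝ)| - C ≤ ‖y n‖) ∧
      Tendsto (fun n : ℕ => ‖y (n : ℤ)‖) atTop atTop ∧
      Tendsto (fun n : ℕ => ‖y (-(n : ℤ))‖) atTop atTop) := by
  have case2 : x = 2 → ∃ δ : ℂ, δ ^ 2 = κ - 2 ∧ ∀ n : ℤ, y n = y 0 + (n : ℂ) * δ := by
    intro hx
    subst hx
    refine ⟨y 1 - y 0, by linear_combination hrel, ?_⟩
    exact rec_ext 2 y (fun n => y 0 + (n : ℂ) * (y 1 - y 0)) hrec (fun n => by push_cast; ring) (by push_cast; ring) (by push_cast; ring)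
  have casem2 : x = -2 → ∃ δ : ℂ, δ ^ 2 = κ - 2 ∧
      ∀ n : ℤ, y n = (-1) ^ n * (y 0 + (n : ℂ) * δ) := by
    intro hx
    subst hx
    refine ⟨-(y 0 + y 1), by linear_combination hrel, ?_⟩
    have hne : (-1 : ℂ) ≠ 0 := by norm_num
    refine rec_ext (-2) y (fun n => (-1) ^ n * (y 0 + (n : ℂ) * (-(y 0 + y 1)))) hrec (fun n => ?_) (by norm_num) (by norm_num)
    simp only [zpow_add_one₀ hne, zpow_sub_one₀ hne]
    push_cast
    field_simp
    ring
  refine ⟨case2, casem2, ?_⟩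
  · intro hk hx
    obtain ⟨δ, hδ, habs⟩ : ∃ δ : ℂ, δ ^ 2 = κ - 2 ∧
        ∀ n : ℤ, ‖y n‖ = ‖y 0 + (n : ℂ) * δ‖ := by
      rcases hx with hx | hx
      · obtain ⟨δ, h1, h2⟩ := case2 hx
        exact ⟨δ, h1, fun n => by rw [h2 n]⟩
      · obtain ⟨δ, h1, h2⟩ := casem2 hx
        refine ⟨δ, h1, fun n => ?_⟩
        rw [h2 n, norm_mul, norm_zpow, norm_neg, norm_one, one_zpow, one_mul]
    have hδ0 : δ ≠ 0 := by
      intro h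
      apply hk
      rw [h] at hδ
      have : (0 : ℂ) = κ - 2 := by simpa using hδ
      linear_combination -this
    have hc : 0 < ‖δ‖ := norm_pos_iff.mpr hδ0
    have hlow : ∀ n : ℤ,
        ‖δ‖ * |(n : ℝ)| - ‖y 0‖ ≤ ‖y n‖ := by
      intro n
      rw [habs n]
      have h2 : ‖(n : ℂ) * δ‖ = |(n : ℝ)| * ‖δ‖ := by
        rw [norm_mul, Complex.norm_intCast]
      have h3 := norm_add_le (y 0 + (n : ℂ) * δ) (-(y 0))
      have h4 : y 0 + (n : ℂ) * δ + -(y 0) = (n : ℂ) * δ := by ring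
      rw [h4, norm_neg] at h3
      rw [mul_comm]
      linarith [h2 ▸ h3]
    have key : Tendsto (fun n : ℕ => ‖δ‖ * (n : ℝ) - ‖y 0‖)
        atTop atTop := by
      have h1 : Tendsto (fun n : ℕ => ‖δ‖ * (n : ℝ)) atTop atTop :=
        Tendsto.const_mul_atTop hc tendsto_natCast_atTop_atTop
      simpa [sub_eq_add_neg] using tendsto_atTop_add_const_right atTop (-(‖y 0‖)) h1
    refine ⟨⟨‖δ‖, hc, ‖y 0‖, hlow⟩, ?_, ?_⟩
    · refine tendsto_atTop_mono (fun n => ?_) key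
      simpa using hlow (n : ℤ)
    · refine tendsto_atTop_mono (fun n => ?_) key
      simpa using hlow (-(n : ℤ))

end TWZ
end
end

section
/- Assume x² = κ + 2 and x ≠ ±2. Then there exists λ ∈ ℂ with λ + λ⁻¹ = x such that y(n) = λⁿ·y(0) for all n ∈ ℤ. In particular, if in addition x is not a real number in [−2,2] and y(0) ≠ 0, then (choosing λ with |λ| > 1, possibly after replacing λ by λ⁻¹ and n by −n) |y(n)| → ∞ as n → +∞ and |y(n)| → 0 as n → −∞, or vice versa. -/
open Filter Topology

noncomputable section

namespace TWZ

/-- Neighbors of `X` when `x² = κ + 2`, `x ≠ ±2`: the values are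
`y(n) = λⁿ·y(0)` with `λ + λ⁻¹ = x`; if moreover `x ∉ [-2,2]` and `y(0) ≠ 0` then
`|y(n)| → ∞` as `n → +∞` and `|y(n)| → 0` as `n → −∞`, or vice versa. -/
theorem neighbors_special (κ x : ℂ) (y : ℤ → ℂ)
    (hrec : ∀ n : ℤ, y (n + 1) + y (n - 1) = x * y n)
    (hrel : x ^ 2 + y 0 ^ 2 + y 1 ^ 2 - x * y 0 * y 1 - 2 = κ)
    (hx : x ^ 2 = κ + 2) (hx2 : x ≠ 2) (hx2' : x ≠ -2) :
    (∃ lam : ℂ, lam + lam⁻¹ = x ∧ ∀ n : ℤ, y n = lam ^ n * y 0) ∧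
    ((¬ ∃ r : ℝ, -2 ≤ r ∧ r ≤ 2 ∧ x = (r : ℂ)) → y 0 ≠ 0 →
      ((Tendsto (fun n : ℕ => ‖y (n : ℤ)‖) atTop atTop ∧
        Tendsto (fun n : ℕ => ‖y (-(n : ℤ))‖) atTop (nhds 0)) ∨
       (Tendsto (fun n : ℕ => ‖y (n : ℤ)‖) atTop (nhds 0) ∧
        Tendsto (fun n : ℕ => ‖y (-(n : ℤ))‖) atTop atTop))) := by

  -- quadratic relation between y 0 and y 1
  have hq : y 0 ^ 2 + y 1 ^ 2 - x * y 0 * y 1 = 0 := by linear_combination hrel - hx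
  -- square root of the discriminant
  obtain ⟨s, hs⟩ : ∃ s : ℂ, s ^ 2 = x ^ 2 - 4 :=
    IsAlgClosed.exists_pow_nat_eq (x ^ 2 - 4) two_pos
  set a : ℂ := (x + s) / 2 with ha
  set b : ℂ := (x - s) / 2 with hb
  have hab : a * b = 1 := by
    rw [ha, hb]; linear_combination (-1/4 : ℂ) * hs
  have hsab : a + b = x := by rw [ha, hb]; ring
  have ha0 : a ≠ 0 := left_ne_zero_of_mul_eq_one hab
  have hb0 : b ≠ 0 := right_ne_zero_of_mul_eq_one hab
  have hainv : a⁻¹ = b := by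
    field_simp; linear_combination (1/4 : ℂ) * hs
  have hbinv : b⁻¹ = a := by
    field_simp; linear_combination (1/4 : ℂ) * hs
  -- the key induction, for a root l with cofactor m
  have key : ∀ l m : ℂ, l ≠ 0 → l * m = 1 → l + m = x → y 1 = l * y 0 →
      ∀ n : ℤ, y n = l ^ n * y 0 := by
    intro l m hl0 hlm hlmx hy1
    have main : ∀ n : ℤ, y n = l ^ n * y 0 ∧ y (n + 1) = l ^ (n + 1) * y 0 := by
      intro n
      induction n using Int.induction_on with
      | zero => exact ⟨by simp, by simpa using hy1⟩
      | succ k ih =>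
        refine ⟨ih.2, ?_⟩
        have h := hrec ((k : ℤ) + 1)
        rw [show ((k : ℤ) + 1 - 1) = (k : ℤ) by ring] at h
        have e1 : l ^ ((k : ℤ) + 1) = l ^ (k : ℤ) * l := zpow_add_one₀ hl0 k
        have e2 : l ^ ((k : ℤ) + 1 + 1) = l ^ ((k : ℤ) + 1) * l := zpow_add_one₀ hl0 _
        have ih1 := ih.1
        have ih2 := ih.2
        rw [e1] at ih2
        rw [e2, e1]
        linear_combination h - ih1 + x * ih2 - (l ^ (k : ℤ) * l * y 0) * hlmx +
          (l ^ (k : ℤ) * y 0) * hlm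
      | pred k ih =>
        have hm : (-(k : ℤ) - 1 + 1) = -(k : ℤ) := by ring
        refine ⟨?_, by rw [hm]; exact ih.1⟩
        have h := hrec (-(k : ℤ))
        have e1 : l ^ (-(k : ℤ) - 1) * l = l ^ (-(k : ℤ)) := by
          have h' := zpow_add_one₀ hl0 (-(k : ℤ) - 1)
          rw [show (-(k : ℤ) - 1 + 1) = -(k : ℤ) by ring] at h'
          exact h'.symm
        have e2 : l ^ (-(k : ℤ) + 1) = l ^ (-(k : ℤ)) * l := zpow_add_one₀ hl0 _
        have ih1 := ih.1
        have ih2 := ih.2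
        rw [← e1] at ih1
        rw [e2, ← e1] at ih2
        linear_combination h - ih2 + x * ih1 -
          (l ^ (-(k : ℤ) - 1) * l * y 0) * hlmx + (l ^ (-(k : ℤ) - 1) * y 0) * hlm
    exact fun n => (main n).1
  -- factor the quadratic
  have hfac : (y 1 - a * y 0) * (y 1 - b * y 0) = 0 := by
    linear_combination hq + (y 0 ^ 2) * hab - (y 0 * y 1) * hsab
  -- choose the root lam
  obtain ⟨lam, hl0, hsum, hy1⟩ :
      ∃ lam : ℂ, lam ≠ 0 ∧ lam + lam⁻¹ = x ∧ y 1 = lam * y 0 := by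
    rcases mul_eq_zero.mp hfac with h | h
    · exact ⟨a, ha0, by rw [hainv]; exact hsab, by linear_combination h⟩
    · exact ⟨b, hb0, by rw [hbinv]; rw [add_comm]; exact hsab, by linear_combination h⟩
  have hall : ∀ n : ℤ, y n = lam ^ n * y 0 :=
    key lam lam⁻¹ hl0 (mul_inv_cancel₀ hl0) hsum hy1
  refine ⟨⟨lam, hsum, hall⟩, ?_⟩
  -- the asymptotic part
  intro hnr hy0
  set r : ℝ := ‖lam‖ with hr
  have hr0 : 0 < r := by
    simpa [hr] using (norm_pos_iff.mpr hl0)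
  have hc0 : 0 < ‖y 0‖ := by
    simpa using (norm_pos_iff.mpr hy0)
  have hr1 : r ≠ 1 := by
    intro h1
    apply hnr
    have hconj : lam⁻¹ = (starRingEnd ℂ) lam := by
      apply Complex.inv_eq_conj
      simpa [hr] using h1
    have hre : |lam.re| ≤ 1 := by
      have := Complex.abs_re_le_norm lam
      rw [← hr, h1] at this
      exact this
    have hre' := abs_le.mp hre
    refine ⟨2 * lam.re, by linarith [hre'.1], by linarith [hre'.2], ?_⟩
    rw [← hsum, hconj, Complex.ext_iff]
    constructor
    · simp [Complex.add_re, Complex.conj_re]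
      push_cast
      ring
    · simp [Complex.add_im, Complex.conj_im]
  have habs : ∀ n : ℤ, ‖y n‖ = r ^ n * ‖y 0‖ := by
    intro n
    rw [hall n, norm_mul, norm_zpow]
  have hpos : ∀ n : ℕ, ‖y (n : ℤ)‖ = r ^ n * ‖y 0‖ := by
    intro n; rw [habs, zpow_natCast]
  have hneg : ∀ n : ℕ, ‖y (-(n : ℤ))‖ = (r⁻¹) ^ n * ‖y 0‖ := by
    intro n; rw [habs, zpow_neg, zpow_natCast, inv_pow]
  rcases lt_or_gt_of_ne hr1 with hlt | hgt
  · right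
    constructor
    · have h0 : Tendsto (fun n : ℕ => r ^ n * ‖y 0‖) atTop (nhds 0) := by
        have := (tendsto_pow_atTop_nhds_zero_of_lt_one hr0.le hlt).mul_const (‖y 0‖)
        simpa using this
      exact h0.congr (fun n => (hpos n).symm)
    · have h1 : (1 : ℝ) < r⁻¹ := one_lt_inv₀ hr0 |>.mpr hlt
      have h0 : Tendsto (fun n : ℕ => (r⁻¹) ^ n * ‖y 0‖) atTop atTop :=
        (tendsto_pow_atTop_atTop_of_one_lt h1).atTop_mul_const hc0
      exact h0.congr (fun n => (hneg n).symm)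
  · left
    constructor
    · have h0 : Tendsto (fun n : ℕ => r ^ n * ‖y 0‖) atTop atTop :=
        (tendsto_pow_atTop_atTop_of_one_lt hgt).atTop_mul_const hc0
      exact h0.congr (fun n => (hpos n).symm)
    · have hlt : r⁻¹ < 1 := inv_lt_one_of_one_lt₀ hgt
      have h0 : Tendsto (fun n : ℕ => (r⁻¹) ^ n * ‖y 0‖) atTop (nhds 0) := by
        have := (tendsto_pow_atTop_nhds_zero_of_lt_one (by positivity) hlt).mul_const (‖y 0‖)
        simpa using this
      exact h0.congr (fun n => (hneg n).symm)


end TWZ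
end
end

section
/- Let κ ∈ ℂ with κ ≠ 2, let φ be a Fricke trace map of level κ, and let (X,Y) be a Farey edge with opposite vertices Z and Z', where Z lies in the open arc A of ℝ̂ ∖ {X,Y} (and Z' in the other open arc). If |φ(X)| > 2, |φ(Y)| > 2 and |φ(Z)| ≥ |φ(Z')|, then |φ(W)| ≥ min(|φ(X)|, |φ(Y)|) for every W ∈ ℚ̂ lying in the closure of A, and consequently ℰ(φ) ∩ A = ∅. -/
open Filter Topology

noncomputable section

namespace TWZ

/-! ### Auxiliary machinery -/

/-- determinant -/
def Dt (a b : QHat) : ℤ := qnum a * qden b - qnum b * qden a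

lemma Dt_def (a b : QHat) : Dt a b = qnum a * qden b - qnum b * qden a := rfl

lemma fareyNbr_iff (a b : QHat) : FareyNbr a b ↔ |Dt a b| = 1 := Iff.rfl

lemma nbr_pm {a b : QHat} (h : FareyNbr a b) : Dt a b = 1 ∨ Dt a b = -1 :=
  (abs_eq (by norm_num)).mp h

lemma nbr_symm {a b : QHat} (h : FareyNbr a b) : FareyNbr b a := by
  rw [fareyNbr_iff, Dt_def] at *
  rw [abs_sub_comm] at h
  exact h

lemma nbr_ne {a b : QHat} (h : FareyNbr a b) : a ≠ b := by
  rintro rfl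
  rw [fareyNbr_iff] at h
  have : Dt a a = 0 := by rw [Dt_def]; ring
  rw [this] at h
  norm_num at h

lemma qden_nonneg (x : QHat) : 0 ≤ qden x := by
  cases x with
  | none => simp [qden]
  | some q => simp [qden]

lemma qden_eq_zero {x : QHat} (h : qden x = 0) : x = none := by
  cases x with
  | none => rfl
  | some q =>
    exfalso
    have : (q.den : ℤ) = 0 := h
    have := q.pos
    omega

lemma qnum_none : qnum (none : QHat) = 1 := rfl
lemma qden_none : qden (none : QHat) = 0 := rfl

lemma rat_eq_of_cross (p q : ℚ) (h : p.num * q.den = q.num * p.den) : p = q := by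
  have h1 : (p.num : ℚ) / (p.den : ℚ) = (q.num : ℚ) / (q.den : ℚ) := by
    rw [div_eq_div_iff (by exact_mod_cast p.den_nz) (by exact_mod_cast q.den_nz)]
    exact_mod_cast h
  rwa [Rat.num_div_den, Rat.num_div_den] at h1

lemma point_eq_of_cross (a b : QHat) (h : qnum a * qden b = qnum b * qden a) : a = b := by
  cases a with
  | none =>
    cases b with
    | none => rfl
    | some q =>
      exfalso
      simp only [qnum, qden, Option.elim] at h
      have := q.pos
      omega
  | some p =>
    cases b with
    | none =>
      exfalso
      simp only [qnum, qden, Option.elim] at h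
      have := p.pos
      omega
    | some q =>
      simp only [qnum, qden, Option.elim] at h
      exact congrArg some (rat_eq_of_cross p q h)

lemma Dt_eq_zero_iff {a b : QHat} : Dt a b = 0 ↔ a = b := by
  constructor
  · intro h
    exact point_eq_of_cross a b (by rw [Dt_def] at h; omega)
  · rintro rfl
    rw [Dt_def]; ring

lemma cop (x : QHat) : IsCoprime (qnum x) (qden x) := by
  cases x with
  | none => simpa [qnum, qden] using isCoprime_one_left
  | some q =>
    rw [Int.isCoprime_iff_gcd_eq_one]
    exact q.reduced

lemma eq_of_pm {Z Z' : QHat}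
    (h : (qnum Z' = qnum Z ∧ qden Z' = qden Z) ∨ (qnum Z' = -qnum Z ∧ qden Z' = -qden Z)) :
    Z' = Z := by
  rcases h with ⟨h1, h2⟩ | ⟨h1, h2⟩
  · exact point_eq_of_cross _ _ (by rw [h1, h2])
  · have hz : qden Z' = 0 ∧ qden Z = 0 := by
      have := qden_nonneg Z; have := qden_nonneg Z'; omega
    rw [qden_eq_zero hz.1, qden_eq_zero hz.2]

lemma exists_point (p q : ℤ) (hq : 0 < q) (h : IsCoprime p q) :
    ∃ N : QHat, qnum N = p ∧ qden N = q := by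
  have hgcd : Int.gcd p q = 1 := Int.isCoprime_iff_gcd_eq_one.mp h
  have hna : q.natAbs = q.toNat := by omega
  refine ⟨some ⟨p, q.toNat, by omega, ?_⟩, rfl, by simp [qden]; omega⟩
  rw [Nat.Coprime, ← hna]
  exact hgcd

lemma exists_point_pm (c1 c2 : ℤ) (h : IsCoprime c1 c2) :
    ∃ (N : QHat) (σ : ℤ), (σ = 1 ∨ σ = -1) ∧ qnum N = σ * c1 ∧ qden N = σ * c2 := by
  rcases lt_trichotomy c2 0 with hc | hc | hc
  · obtain ⟨N, hn, hd⟩ := exists_point (-c1) (-c2) (by omega) h.neg_neg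
    exact ⟨N, -1, Or.inr rfl, by omega, by omega⟩
  · subst hc
    have : IsUnit c1 := (isCoprime_zero_right.mp h)
    rcases Int.isUnit_iff.mp this with h1 | h1 <;> subst h1
    · exact ⟨none, 1, Or.inl rfl, by simp [qnum_none], by simp [qden_none]⟩
    · exact ⟨none, -1, Or.inr rfl, by simp [qnum_none], by simp [qden_none]⟩
  · obtain ⟨N, hn, hd⟩ := exists_point c1 c2 hc h
    exact ⟨N, 1, Or.inl rfl, by omega, by omega⟩

/-- decomposition in the unimodular basis -/
lemma dec (U V W : QHat) (h2 : Dt U V * Dt U V = 1) :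
    qnum W = (Dt U V * Dt W V) * qnum U + (-(Dt U V * Dt W U)) * qnum V ∧
    qden W = (Dt U V * Dt W V) * qden U + (-(Dt U V * Dt W U)) * qden V := by
  rw [Dt_def, Dt_def, Dt_def] at *
  constructor
  · linear_combination (-(qnum W)) * h2
  · linear_combination (-(qden W)) * h2

/-- classification of opposite vertices of a Farey edge -/
lemma classify (U V Z : QHat) (hUV : FareyNbr U V) (hUZ : FareyNbr U Z) (hVZ : FareyNbr V Z) :
    ∃ a b : ℤ, (a = 1 ∨ a = -1) ∧ (b = 1 ∨ b = -1) ∧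
      qnum Z = a * qnum U + b * qnum V ∧ qden Z = a * qden U + b * qden V := by
  have hε := nbr_pm hUV
  have h2 : Dt U V * Dt U V = 1 := by rcases hε with h | h <;> rw [h] <;> norm_num
  obtain ⟨hn, hd⟩ := dec U V Z h2
  have hzv : Dt Z V = 1 ∨ Dt Z V = -1 := by
    have := nbr_pm hVZ
    have hs : Dt Z V = -(Dt V Z) := by rw [Dt_def, Dt_def]; ring
    omega
  have hzu : Dt Z U = 1 ∨ Dt Z U = -1 := by
    have := nbr_pm hUZ
    have hs : Dt Z U = -(Dt U Z) := by rw [Dt_def, Dt_def]; ring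
    omega
  refine ⟨Dt U V * Dt Z V, -(Dt U V * Dt Z U), ?_, ?_, hn, hd⟩
  · rcases hε with h | h <;> rcases hzv with h' | h' <;> rw [h, h'] <;> norm_num
  · rcases hε with h | h <;> rcases hzu with h' | h' <;> rw [h, h'] <;> norm_num


/-- sign of an opposite vertex, in terms of its coefficients -/
lemma sf_of_coeffs (U V Z : QHat) (a b : ℤ)
    (hn : qnum Z = a * qnum U + b * qnum V) (hd : qden Z = a * qden U + b * qden V)
    (h2 : Dt U V * Dt U V = 1) :
    Dt Z U * Dt Z V = -(a * b) := by
  have e1 : Dt Z U = -(b * Dt U V) := by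
    rw [Dt_def, Dt_def, hn, hd]; ring
  have e2 : Dt Z V = a * Dt U V := by
    rw [Dt_def, Dt_def, hn, hd]; ring
  rw [e1, e2]
  linear_combination (-(a*b)) * h2

lemma sf_pm {U V P : QHat} (hUP : FareyNbr U P) (hVP : FareyNbr V P) :
    Dt P U * Dt P V = 1 ∨ Dt P U * Dt P V = -1 := by
  have h1 : Dt P U = 1 ∨ Dt P U = -1 := by
    have := nbr_pm hUP
    have hs : Dt P U = -(Dt U P) := by rw [Dt_def, Dt_def]; ring
    omega
  have h2 : Dt P V = 1 ∨ Dt P V = -1 := by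
    have := nbr_pm hVP
    have hs : Dt P V = -(Dt V P) := by rw [Dt_def, Dt_def]; ring
    omega
  rcases h1 with h | h <;> rcases h2 with h' | h' <;> rw [h, h'] <;> norm_num

/-- two distinct opposite vertices of an edge lie on opposite sides -/
lemma sf_opp {U V Z Z' : QHat} (hUV : FareyNbr U V)
    (hUZ : FareyNbr U Z) (hVZ : FareyNbr V Z)
    (hUZ' : FareyNbr U Z') (hVZ' : FareyNbr V Z') (hne : Z ≠ Z') :
    Dt Z' U * Dt Z' V = -(Dt Z U * Dt Z V) := by
  have hε := nbr_pm hUV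
  have h2 : Dt U V * Dt U V = 1 := by rcases hε with h | h <;> rw [h] <;> norm_num
  obtain ⟨a, b, ha, hb, hn, hd⟩ := classify U V Z hUV hUZ hVZ
  obtain ⟨a', b', ha', hb', hn', hd'⟩ := classify U V Z' hUV hUZ' hVZ'
  have s1 := sf_of_coeffs U V Z a b hn hd h2
  have s2 := sf_of_coeffs U V Z' a' b' hn' hd' h2
  have pa : a * b = 1 ∨ a * b = -1 := by
    rcases ha with rfl | rfl <;> rcases hb with rfl | rfl <;> norm_num
  have pa' : a' * b' = 1 ∨ a' * b' = -1 := by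
    rcases ha' with rfl | rfl <;> rcases hb' with rfl | rfl <;> norm_num
  rw [s1, s2]
  by_contra hc
  have hab : a' * b' = a * b := by omega
  have hcase : (a' = a ∧ b' = b) ∨ (a' = -a ∧ b' = -b) := by
    rcases ha with rfl | rfl <;> rcases hb with rfl | rfl <;>
      rcases ha' with rfl | rfl <;> rcases hb' with rfl | rfl <;> omega
  apply hne
  symm
  apply eq_of_pm
  rcases hcase with ⟨h1, h2⟩ | ⟨h1, h2⟩
  · left
    constructor
    · rw [hn', hn, h1, h2]
    · rw [hd', hd, h1, h2]
  · right
    constructor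
    · rw [hn', hn, h1, h2]; ring
    · rw [hd', hd, h1, h2]; ring

/-- existence of the second opposite vertex, on the other side -/
lemma exists_other (U V P : QHat) (hUV : FareyNbr U V) (hUP : FareyNbr U P)
    (hVP : FareyNbr V P) :
    ∃ N : QHat, FareyNbr U N ∧ FareyNbr V N ∧
      Dt N U * Dt N V = -(Dt P U * Dt P V) := by
  have hε := nbr_pm hUV
  have h2 : Dt U V * Dt U V = 1 := by rcases hε with h | h <;> rw [h] <;> norm_num
  obtain ⟨a, b, ha, hb, hn, hd⟩ := classify U V P hUV hUP hVP
  have sP := sf_of_coeffs U V P a b hn hd h2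
  set c1 := a * qnum U - b * qnum V with hc1
  set c2 := a * qden U - b * qden V with hc2
  have k1 : c1 * qden U - qnum U * c2 = b * Dt U V := by
    rw [hc1, hc2, Dt_def]; ring
  have k2 : c1 * qden V - qnum V * c2 = a * Dt U V := by
    rw [hc1, hc2, Dt_def]; ring
  have hbez : IsCoprime c1 c2 := by
    refine ⟨b * Dt U V * qden U, -(b * Dt U V) * qnum U, ?_⟩
    have hb2 : b * Dt U V = 1 ∨ b * Dt U V = -1 := by
      rcases hb with rfl | rfl <;> rcases hε with h | h <;> rw [h] <;> norm_num
    rcases hb2 with h | h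
    · rw [show b * Dt U V * qden U * c1 + -(b * Dt U V) * qnum U * c2
          = (b * Dt U V) * (c1 * qden U - qnum U * c2) by ring, k1, h]; norm_num
    · rw [show b * Dt U V * qden U * c1 + -(b * Dt U V) * qnum U * c2
          = (b * Dt U V) * (c1 * qden U - qnum U * c2) by ring, k1, h]; norm_num
  obtain ⟨N, σ, hσ, hNn, hNd⟩ := exists_point_pm c1 c2 hbez
  have e1 : Dt N U = σ * (b * Dt U V) := by
    rw [Dt_def, hNn, hNd, ← k1]; ring
  have e2 : Dt N V = σ * (a * Dt U V) := by
    rw [Dt_def, hNn, hNd, ← k2]; ring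
  have hσ2 : σ * σ = 1 := by rcases hσ with rfl | rfl <;> norm_num
  refine ⟨N, ?_, ?_, ?_⟩
  · rw [fareyNbr_iff]
    have : Dt U N = -(σ * (b * Dt U V)) := by
      have hs : Dt U N = -(Dt N U) := by rw [Dt_def, Dt_def]; ring
      rw [hs, e1]
    rw [this]
    rcases hσ with rfl | rfl <;> rcases hb with rfl | rfl <;> rcases hε with h | h <;>
      rw [h] <;> norm_num
  · rw [fareyNbr_iff]
    have : Dt V N = -(σ * (a * Dt U V)) := by
      have hs : Dt V N = -(Dt N V) := by rw [Dt_def, Dt_def]; ring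
      rw [hs, e2]
    rw [this]
    rcases hσ with rfl | rfl <;> rcases ha with rfl | rfl <;> rcases hε with h | h <;>
      rw [h] <;> norm_num
  · rw [e1, e2, sP]
    rcases hσ with rfl | rfl <;> rcases ha with rfl | rfl <;> rcases hb with rfl | rfl <;>
      rcases hε with h | h <;> rw [h] <;> ring

/-- the descent step: a vertex on the far side of an edge, other than the opposite
vertex `M`, lies strictly inside one of the two child edges, with smaller complexity -/
lemma descent (U V M W : QHat) (hUV : FareyNbr U V) (hUM : FareyNbr U M) (hVM : FareyNbr V M)
    (hside : 0 < (Dt W U * Dt W V) * (Dt M U * Dt M V)) (hWM : W ≠ M) :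
    ((Dt W U * Dt W M) * (Dt V U * Dt V M) < 0 ∧ (Dt W M).natAbs < (Dt W V).natAbs) ∨
    ((Dt W M * Dt W V) * (Dt U M * Dt U V) < 0 ∧ (Dt W M).natAbs < (Dt W U).natAbs) := by
  have hε := nbr_pm hUV
  have h2 : Dt U V * Dt U V = 1 := by rcases hε with h | h <;> rw [h] <;> norm_num
  obtain ⟨a, b, ha, hb, hn, hd⟩ := classify U V M hUV hUM hVM
  have ha2 : a * a = 1 := by rcases ha with rfl | rfl <;> norm_num
  have hb2 : b * b = 1 := by rcases hb with rfl | rfl <;> norm_num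
  obtain ⟨hwn, hwd⟩ := dec U V W h2
  set α := Dt U V * Dt W V with hαdef
  set β := -(Dt U V * Dt W U) with hβdef
  have e1 : Dt W U = -(β * Dt U V) := by
    rw [hβdef]; linear_combination (-(Dt W U)) * h2
  have e2 : Dt W V = α * Dt U V := by
    rw [hαdef]; linear_combination (-(Dt W V)) * h2
  have e3 : Dt W M = (α * b - β * a) * Dt U V := by
    simp only [Dt_def]; rw [hwn, hwd, hn, hd]; ring
  have e4 : Dt M U = -(b * Dt U V) := by
    simp only [Dt_def]; rw [hn, hd]; ring
  have e5 : Dt M V = a * Dt U V := by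
    simp only [Dt_def]; rw [hn, hd]; ring
  have e6 : Dt V U = -(Dt U V) := by simp only [Dt_def]; ring
  have e7 : Dt V M = -(a * Dt U V) := by
    simp only [Dt_def]; rw [hn, hd]; ring
  have e8 : Dt U M = b * Dt U V := by
    simp only [Dt_def]; rw [hn, hd]; ring
  set u := a * α with hu
  set v := b * β with hv
  have hαa : α = a * u := by rw [hu]; linear_combination (-α) * ha2
  have hβb : β = b * v := by rw [hv]; linear_combination (-β) * hb2
  have huv : 0 < u * v := by
    have key : (Dt W U * Dt W V) * (Dt M U * Dt M V) = u * v := by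
      rw [e1, e2, e4, e5, hu, hv]
      linear_combination (a * b * α * β * (Dt U V * Dt U V + 1)) * h2
    linarith [key ▸ hside]
  have hne11 : ¬(u = 1 ∧ v = 1) := by
    rintro ⟨h1', h2'⟩
    apply hWM
    apply point_eq_of_cross
    rw [hwn, hwd, hn, hd, hαa, hβb, h1', h2']; ring
  have hnem : ¬(u = -1 ∧ v = -1) := by
    rintro ⟨h1', h2'⟩
    apply hWM
    apply eq_of_pm (Z := M) (Z' := W)
    right
    constructor
    · rw [hwn, hn, hαa, hβb, h1', h2']; ring
    · rw [hwd, hd, hαa, hβb, h1', h2']; ring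
  have hval : u ≠ v := by
    intro h
    have hdvd1 : u ∣ qnum W := ⟨qnum M, by rw [hwn, hn, hαa, hβb, ← h]; ring⟩
    have hdvd2 : u ∣ qden W := ⟨qden M, by rw [hwd, hd, hαa, hβb, ← h]; ring⟩
    rcases Int.isUnit_iff.mp ((cop W).isUnit_of_dvd' hdvd1 hdvd2) with h1 | h1
    · exact hne11 ⟨h1, by omega⟩
    · exact hnem ⟨h1, by omega⟩
  have pa : a * Dt U V = 1 ∨ a * Dt U V = -1 := by
    rcases ha with rfl | rfl <;> rcases hε with h | h <;> rw [h] <;> norm_num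
  have pb : b * Dt U V = 1 ∨ b * Dt U V = -1 := by
    rcases hb with rfl | rfl <;> rcases hε with h | h <;> rw [h] <;> norm_num
  have pab : a * b * Dt U V = 1 ∨ a * b * Dt U V = -1 := by
    rcases ha with rfl | rfl <;> rcases hb with rfl | rfl <;> rcases hε with h | h <;>
      rw [h] <;> norm_num
  have r1 : Dt W V = (a * Dt U V) * u := by rw [e2, hαa]; ring
  have r2 : Dt W U = -((b * Dt U V) * v) := by rw [e1, hβb]; ring
  have r3 : Dt W M = (a * b * Dt U V) * (u - v) := by rw [e3, hαa, hβb]; ring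
  have n1 : (Dt W V).natAbs = u.natAbs := by
    rcases pa with h | h <;> rw [r1, h] <;> omega
  have n2 : (Dt W U).natAbs = v.natAbs := by
    rcases pb with h | h <;> rw [r2, h] <;> omega
  have n3 : (Dt W M).natAbs = (u - v).natAbs := by
    rcases pab with h | h <;> rw [r3, h] <;> omega
  have I1 : (Dt W U * Dt W M) * (Dt V U * Dt V M) = -(v * (u - v)) := by
    rw [r2, r3, e6, e7]
    linear_combination (-(v * (u - v)) * (b * b) * (Dt U V) ^ 4) * ha2 +
      (-(v * (u - v)) * (Dt U V) ^ 4) * hb2 +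
      (-(v * (u - v)) * ((Dt U V) ^ 2 + 1)) * h2
  have I2 : (Dt W M * Dt W V) * (Dt U M * Dt U V) = u * (u - v) := by
    rw [r3, r1, e8]
    linear_combination ((u * (u - v)) * (b * b) * (Dt U V) ^ 4) * ha2 +
      ((u * (u - v)) * (Dt U V) ^ 4) * hb2 +
      ((u * (u - v)) * ((Dt U V) ^ 2 + 1)) * h2
  rcases mul_pos_iff.mp huv with ⟨hu0, hv0⟩ | ⟨hu0, hv0⟩ <;>
    rcases lt_trichotomy u v with hlt | heq | hlt
  · right
    refine ⟨?_, by omega⟩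
    rw [I2]
    exact mul_neg_of_pos_of_neg hu0 (by linarith)
  · exact absurd heq hval
  · left
    refine ⟨?_, by omega⟩
    rw [I1]
    have := mul_pos hv0 (by linarith : (0:ℤ) < u - v)
    linarith
  · left
    refine ⟨?_, by omega⟩
    rw [I1]
    have := mul_pos_of_neg_of_neg hv0 (by linarith : u - v < (0:ℤ))
    linarith
  · exact absurd heq hval
  · right
    refine ⟨?_, by omega⟩
    rw [I2]
    exact mul_neg_of_neg_of_pos hu0 (by linarith)

/-- growth of trace values under descent -/
lemma grow (κ : ℂ) (φ : QHat → ℂ) (hφ : IsFricke κ φ) :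
    ∀ t : ℕ, ∀ U V P W : QHat, FareyNbr U V → FareyNbr U P → FareyNbr V P →
      (Dt W U * Dt W V) * (Dt P U * Dt P V) < 0 →
      (Dt W U).natAbs + (Dt W V).natAbs ≤ t →
      2 < ‖φ U‖ → 2 < ‖φ V‖ →
      ‖φ P‖ ≤ max (‖φ U‖) (‖φ V‖) →
      max (‖φ U‖) (‖φ V‖) < ‖φ W‖ := by
  intro t
  induction t using Nat.strongRecOn with
  | ind t IH =>
  intro U V P W hUV hUP hVP hside ht hU hV hP
  obtain ⟨N, hUN, hVN, hsN⟩ := exists_other U V P hUV hUP hVP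
  have hPpm := sf_pm hUP hVP
  have hNP : N ≠ P := by
    intro h
    rw [h] at hsN
    rcases hPpm with h' | h' <;> rw [h'] at hsN <;> norm_num at hsN
  have hedge : φ N + φ P = φ U * φ V :=
    hφ.2 U V N P ⟨hUV, hVN, hUN⟩ ⟨hUV, hVP, hUP⟩ hNP
  have habs : ‖φ U‖ * ‖φ V‖ - ‖φ P‖
      ≤ ‖φ N‖ := by
    have h1 : φ N = φ U * φ V - φ P := by linear_combination hedge
    calc ‖φ U‖ * ‖φ V‖ - ‖φ P‖
        = ‖φ U * φ V‖ - ‖φ P‖ := by rw [norm_mul]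
      _ ≤ ‖φ U * φ V - φ P‖ := norm_sub_norm_le _ _
      _ = ‖φ N‖ := by rw [h1]
  have hNgt : max (‖φ U‖) (‖φ V‖) < ‖φ N‖ := by
    rcases le_total (‖φ U‖) (‖φ V‖) with h | h
    · rw [max_eq_right h] at hP ⊢
      nlinarith [mul_pos (by linarith : (0:ℝ) < ‖φ U‖ - 2)
        (by linarith : (0:ℝ) < ‖φ V‖)]
    · rw [max_eq_left h] at hP ⊢
      nlinarith [mul_pos (by linarith : (0:ℝ) < ‖φ V‖ - 2)
        (by linarith : (0:ℝ) < ‖φ U‖)]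
  by_cases hWN : W = N
  · rw [hWN]; exact hNgt
  · have hsideN : 0 < (Dt W U * Dt W V) * (Dt N U * Dt N V) := by
      have hr : (Dt W U * Dt W V) * -(Dt P U * Dt P V)
          = -((Dt W U * Dt W V) * (Dt P U * Dt P V)) := by ring
      rw [hsN, hr]
      linarith
    have hN2 : 2 < ‖φ N‖ :=
      lt_trans (lt_of_lt_of_le hU (le_max_left _ _)) hNgt
    rcases descent U V N W hUV hUN hVN hsideN hWN with ⟨hs1, hlt1⟩ | ⟨hs2, hlt2⟩
    · have hres := IH ((Dt W U).natAbs + (Dt W N).natAbs) (by omega) U N V W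
        hUN hUV (nbr_symm hVN) hs1 le_rfl hU hN2
        (le_trans (le_of_lt (lt_of_le_of_lt (le_max_right _ _) hNgt)) (le_max_right _ _))
      have m1 : ‖φ U‖ < ‖φ W‖ :=
        lt_of_le_of_lt (le_max_left _ _) hres
      have m2 : ‖φ V‖ < ‖φ W‖ :=
        lt_trans (lt_of_le_of_lt (le_max_right _ _) hNgt)
          (lt_of_le_of_lt (le_max_right _ _) hres)
      exact max_lt m1 m2
    · have hres := IH ((Dt W N).natAbs + (Dt W V).natAbs) (by omega) N V U W
        (nbr_symm hVN) (nbr_symm hUN) (nbr_symm hUV) hs2 le_rfl hN2 hV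
        (le_trans (le_of_lt (lt_of_le_of_lt (le_max_left _ _) hNgt)) (le_max_left _ _))
      have m1 : ‖φ U‖ < ‖φ W‖ :=
        lt_trans (lt_of_le_of_lt (le_max_left _ _) hNgt)
          (lt_of_le_of_lt (le_max_left _ _) hres)
      have m2 : ‖φ V‖ < ‖φ W‖ :=
        lt_of_le_of_lt (le_max_right _ _) hres
      exact max_lt m1 m2

/-- only finitely many vertices on the far side of an edge have small trace -/
lemma finite_small (κ : ℂ) (φ : QHat → ℂ) (hφ : IsFricke κ φ) (μ : ℝ) (hμ : 2 < μ) :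
    ∀ n : ℕ, ∀ U V P : QHat, FareyNbr U V → FareyNbr U P → FareyNbr V P →
      μ ≤ ‖φ U‖ → μ ≤ ‖φ V‖ →
      ‖φ P‖ ≤ max (‖φ U‖) (‖φ V‖) →
      ∀ K : ℝ, K ≤ max (‖φ U‖) (‖φ V‖) + n * (μ * (μ - 2)) →
      {W : QHat | (Dt W U * Dt W V) * (Dt P U * Dt P V) < 0
        ∧ ‖φ W‖ ≤ K}.Finite := by
  intro n
  induction n with
  | zero =>
    intro U V P hUV hUP hVP hU hV hP K hK
    apply Set.Finite.subset Set.finite_empty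
    rintro W ⟨h1, h2⟩
    exfalso
    have := grow κ φ hφ ((Dt W U).natAbs + (Dt W V).natAbs) U V P W hUV hUP hVP h1 le_rfl
      (by linarith) (by linarith) hP
    simp only [Nat.cast_zero, zero_mul, add_zero] at hK
    linarith
  | succ n IHn =>
    intro U V P hUV hUP hVP hU hV hP K hK
    obtain ⟨N, hUN, hVN, hsN⟩ := exists_other U V P hUV hUP hVP
    have hPpm := sf_pm hUP hVP
    have hNP : N ≠ P := by
      intro h
      rw [h] at hsN
      rcases hPpm with h' | h' <;> rw [h'] at hsN <;> norm_num at hsN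
    have hedge : φ N + φ P = φ U * φ V :=
      hφ.2 U V N P ⟨hUV, hVN, hUN⟩ ⟨hUV, hVP, hUP⟩ hNP
    have habs : ‖φ U‖ * ‖φ V‖ - ‖φ P‖
        ≤ ‖φ N‖ := by
      have h1 : φ N = φ U * φ V - φ P := by linear_combination hedge
      calc ‖φ U‖ * ‖φ V‖ - ‖φ P‖
          = ‖φ U * φ V‖ - ‖φ P‖ := by rw [norm_mul]
        _ ≤ ‖φ U * φ V - φ P‖ := norm_sub_norm_le _ _
        _ = ‖φ N‖ := by rw [h1]
    have hNd : max (‖φ U‖) (‖φ V‖) + μ * (μ - 2)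
        ≤ ‖φ N‖ := by
      rcases le_total (‖φ U‖) (‖φ V‖) with h | h
      · rw [max_eq_right h] at hP ⊢
        nlinarith [mul_nonneg (by linarith : (0:ℝ) ≤ ‖φ V‖ - μ)
            (by linarith : (0:ℝ) ≤ ‖φ U‖ - 2),
          mul_nonneg (by linarith : (0:ℝ) ≤ ‖φ U‖ - μ)
            (by linarith : (0:ℝ) ≤ μ)]
      · rw [max_eq_left h] at hP ⊢
        nlinarith [mul_nonneg (by linarith : (0:ℝ) ≤ ‖φ U‖ - μ)
            (by linarith : (0:ℝ) ≤ ‖φ V‖ - 2),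
          mul_nonneg (by linarith : (0:ℝ) ≤ ‖φ V‖ - μ)
            (by linarith : (0:ℝ) ≤ μ)]
    have hδ : 0 < μ * (μ - 2) := mul_pos (by linarith) (by linarith)
    have hNgt : max (‖φ U‖) (‖φ V‖) < ‖φ N‖ := by
      linarith
    have hN2 : 2 < ‖φ N‖ :=
      lt_trans (lt_of_lt_of_le (by linarith : (2:ℝ) < μ)
        (le_trans hU (le_max_left _ _))) hNgt
    have hNμ : μ ≤ ‖φ N‖ :=
      le_trans (le_trans hU (le_max_left _ _)) hNgt.le
    have hcast : ((n + 1 : ℕ) : ℝ) = (n : ℝ) + 1 := by push_cast; ring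
    have hfin1 := IHn U N V hUN hUV (nbr_symm hVN) hU hNμ
      (le_trans (le_of_lt (lt_of_le_of_lt (le_max_right _ _) hNgt)) (le_max_right _ _))
      K (by
        have : ‖φ N‖ ≤ max (‖φ U‖) (‖φ N‖) :=
          le_max_right _ _
        rw [hcast] at hK
        linarith)
    have hfin2 := IHn N V U (nbr_symm hVN) (nbr_symm hUN) (nbr_symm hUV) hNμ hV
      (le_trans (le_of_lt (lt_of_le_of_lt (le_max_left _ _) hNgt)) (le_max_left _ _))
      K (by
        have : ‖φ N‖ ≤ max (‖φ N‖) (‖φ V‖) :=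
          le_max_left _ _
        rw [hcast] at hK
        linarith)
    apply Set.Finite.subset ((hfin1.union hfin2).insert N)
    rintro W ⟨h1, h2⟩
    by_cases hWN : W = N
    · exact Set.mem_insert_iff.mpr (Or.inl hWN)
    · have hsideN : 0 < (Dt W U * Dt W V) * (Dt N U * Dt N V) := by
        have hr : (Dt W U * Dt W V) * -(Dt P U * Dt P V)
            = -((Dt W U * Dt W V) * (Dt P U * Dt P V)) := by ring
        rw [hsN, hr]
        linarith
      rcases descent U V N W hUV hUN hVN hsideN hWN with ⟨hs1, _⟩ | ⟨hs2, _⟩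
      · exact Set.mem_insert_iff.mpr (Or.inr (Set.mem_union_left _ ⟨hs1, h2⟩))
      · exact Set.mem_insert_iff.mpr (Or.inr (Set.mem_union_right _ ⟨hs2, h2⟩))

lemma rat_lt (w r : ℚ) : w < r ↔ w.num * r.den < r.num * w.den := by
  rw [← @Rat.num_div_den w, ← @Rat.num_div_den r,
    div_lt_div_iff₀ (by exact_mod_cast w.pos) (by exact_mod_cast r.pos)]
  push_cast
  rw [Rat.num_div_den, Rat.num_div_den]
  exact_mod_cast Iff.rfl

lemma toRHat_none : toRHat none = (none : RHat) := rfl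
lemma toRHat_some (q : ℚ) : toRHat (some q) = OnePoint.some (q : ℝ) := rfl
lemma toRHat_inj : Function.Injective toRHat :=
  Option.map_injective Rat.cast_injective

lemma infty_mem_closure_Iio (x : ℝ) :
    (OnePoint.infty : OnePoint ℝ) ∈ closure (OnePoint.some '' Set.Iio x) := by
  rw [mem_closure_iff_nhds_basis OnePoint.hasBasis_nhds_infty]
  rintro s ⟨hsc, hsk⟩
  obtain ⟨b, hb⟩ := hsk.bddBelow
  refine ⟨OnePoint.some (min x b - 1), ⟨min x b - 1, ?_, rfl⟩,
    Or.inl ⟨min x b - 1, fun hmem => ?_, rfl⟩⟩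
  · have := min_le_left x b
    simp only [Set.mem_Iio]
    linarith
  · have := hb hmem
    have h1 := min_le_right x b
    linarith
lemma infty_mem_closure_Ioi (x : ℝ) :
    (OnePoint.infty : OnePoint ℝ) ∈ closure (OnePoint.some '' Set.Ioi x) := by
  rw [mem_closure_iff_nhds_basis OnePoint.hasBasis_nhds_infty]
  rintro s ⟨hsc, hsk⟩
  obtain ⟨b, hb⟩ := hsk.bddAbove
  refine ⟨OnePoint.some (max x b + 1), ⟨max x b + 1, ?_, rfl⟩,
    Or.inl ⟨max x b + 1, fun hmem => ?_, rfl⟩⟩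
  · have := le_max_left x b
    simp only [Set.mem_Ioi]
    linarith
  · have := hb hmem
    have h1 := le_max_right x b
    linarith

/-- the two arcs of the circle minus `{∞, r}` -/
lemma arcs_infty (r : ℚ) :
    ∃ P Q : Set RHat, IsOpen P ∧ IsOpen Q ∧ IsPreconnected P ∧ IsPreconnected Q ∧
      P ∩ Q = ∅ ∧ P ∪ Q = ({toRHat none, toRHat (some r)} : Set RHat)ᶜ ∧
      (∀ W : QHat, toRHat W ∈ P ↔ 0 < Dt W none * Dt W (some r)) ∧
      (∀ W : QHat, toRHat W ∈ Q ↔ Dt W none * Dt W (some r) < 0) := by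
  refine ⟨OnePoint.some '' Set.Iio (r : ℝ), OnePoint.some '' Set.Ioi (r : ℝ),
    OnePoint.isOpenEmbedding_coe.isOpenMap _ isOpen_Iio,
    OnePoint.isOpenEmbedding_coe.isOpenMap _ isOpen_Ioi,
    isPreconnected_Iio.image _ OnePoint.continuous_coe.continuousOn,
    isPreconnected_Ioi.image _ OnePoint.continuous_coe.continuousOn, ?_, ?_, ?_, ?_⟩
  · apply Set.eq_empty_iff_forall_notMem.mpr
    rintro z ⟨⟨t, ht, rfl⟩, ⟨t', ht', h⟩⟩
    have : t' = t := OnePoint.coe_eq_coe.mp h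
    subst this
    simp only [Set.mem_Iio, Set.mem_Ioi] at ht ht'
    linarith
  · ext z
    cases z with
    | none =>
      simp only [Set.mem_union, Set.mem_image, Set.mem_compl_iff, Set.mem_insert_iff,
        Set.mem_singleton_iff, toRHat_none, toRHat_some]
      constructor
      · rintro (⟨t, _, h⟩ | ⟨t, _, h⟩) <;> exact absurd h (Option.some_ne_none _)
      · intro h
        exact absurd (Set.mem_insert _ _) h
    | some t =>
      simp only [Set.mem_union, Set.mem_image, Set.mem_compl_iff, Set.mem_insert_iff,
        Set.mem_singleton_iff, toRHat_none, toRHat_some, Set.mem_Iio, Set.mem_Ioi]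
      constructor
      · rintro (⟨u, hu, h⟩ | ⟨u, hu, h⟩)
        · have hut : u = t := Option.some_injective _ h
          subst hut
          rintro (h' | h')
          · exact Option.some_ne_none _ h'
          · have hrt : u = (r : ℝ) := Option.some_injective _ h'
            subst hrt
            exact lt_irrefl _ (Set.mem_Iio.mp hu)
        · have hut : u = t := Option.some_injective _ h
          subst hut
          rintro (h' | h')
          · exact Option.some_ne_none _ h'
          · have hrt : u = (r : ℝ) := Option.some_injective _ h'
            subst hrt
            exact lt_irrefl _ (Set.mem_Ioi.mp hu)
      · intro h
        have hne : t ≠ (r : ℝ) := by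
          intro h'
          exact h (Or.inr (by rw [h']; exact rfl))
        rcases lt_or_gt_of_ne hne with h' | h'
        · exact Or.inl ⟨t, h', rfl⟩
        · exact Or.inr ⟨t, h', rfl⟩
  · intro W
    cases W with
    | none =>
      simp only [toRHat_none, Dt_def, qnum, qden, Option.elim]
      constructor
      · rintro ⟨t, _, h⟩
        exact absurd h (Option.some_ne_none _)
      · intro h
        change (0:ℤ) < (1 * 0 - 1 * 0) * Dt none (some r) at h
        simp at h
    | some w =>
      have hd : (0:ℤ) < (w.den : ℤ) := by exact_mod_cast w.pos
      have hDt : Dt (some w) none * Dt (some w) (some r)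
          = (w.den : ℤ) * (r.num * (w.den : ℤ) - w.num * (r.den : ℤ)) := by
        delta Dt qnum qden
        simp only [Option.elim]
        ring
      rw [toRHat_some, hDt]
      constructor
      · rintro ⟨t, ht, h⟩
        have : t = (w : ℝ) := OnePoint.coe_eq_coe.mp h
        subst this
        simp only [Set.mem_Iio] at ht
        have hwr : w < r := by exact_mod_cast ht
        have := (rat_lt w r).mp hwr
        exact mul_pos hd (by linarith)
      · intro h
        have h2 : 0 < r.num * (w.den : ℤ) - w.num * (r.den : ℤ) := by
          rcases lt_trichotomy (r.num * (w.den : ℤ) - w.num * (r.den : ℤ)) 0 with h' | h' | h'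
          · nlinarith
          · rw [h'] at h; norm_num at h
          · exact h'
        have hwr : w < r := (rat_lt w r).mpr (by linarith)
        exact ⟨(w : ℝ), by simpa using (Rat.cast_lt (K := ℝ)).mpr hwr, rfl⟩
  · intro W
    cases W with
    | none =>
      simp only [toRHat_none, Dt_def, qnum, qden, Option.elim]
      constructor
      · rintro ⟨t, _, h⟩
        exact absurd h (Option.some_ne_none _)
      · intro h
        change (1 * 0 - 1 * 0) * Dt none (some r) < (0:ℤ) at h
        simp at h
    | some w =>
      have hd : (0:ℤ) < (w.den : ℤ) := by exact_mod_cast w.pos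
      have hDt : Dt (some w) none * Dt (some w) (some r)
          = (w.den : ℤ) * (r.num * (w.den : ℤ) - w.num * (r.den : ℤ)) := by
        delta Dt qnum qden
        simp only [Option.elim]
        ring
      rw [toRHat_some, hDt]
      constructor
      · rintro ⟨t, ht, h⟩
        have : t = (w : ℝ) := OnePoint.coe_eq_coe.mp h
        subst this
        simp only [Set.mem_Ioi] at ht
        have hwr : r < w := by exact_mod_cast ht
        have := (rat_lt r w).mp hwr
        have : r.num * (w.den : ℤ) - w.num * (r.den : ℤ) < 0 := by linarith
        exact mul_neg_of_pos_of_neg hd this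
      · intro h
        have h2 : r.num * (w.den : ℤ) - w.num * (r.den : ℤ) < 0 := by
          rcases lt_trichotomy (r.num * (w.den : ℤ) - w.num * (r.den : ℤ)) 0 with h' | h' | h'
          · exact h'
          · rw [h'] at h; norm_num at h
          · nlinarith
        have hwr : r < w := (rat_lt r w).mpr (by linarith)
        exact ⟨(w : ℝ), by simpa using (Rat.cast_lt (K := ℝ)).mpr hwr, rfl⟩

lemma dt_pos (w r : ℚ) : 0 < Dt (some w) (some r) ↔ r < w := by
  delta Dt qnum qden
  simp only [Option.elim]
  rw [rat_lt r w]
  omega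

lemma dt_neg (w r : ℚ) : Dt (some w) (some r) < 0 ↔ w < r := by
  delta Dt qnum qden
  simp only [Option.elim]
  rw [rat_lt w r]
  omega

lemma dt_self (w : ℚ) : Dt (some w) (some w) = 0 := by
  delta Dt qnum qden
  simp only [Option.elim]
  ring

/-- the two arcs of the circle minus two finite points `x < y` -/
lemma arcs_fin (x y : ℚ) (hxy : x < y) :
    ∃ P Q : Set RHat, IsOpen P ∧ IsOpen Q ∧ IsPreconnected P ∧ IsPreconnected Q ∧
      P ∩ Q = ∅ ∧ P ∪ Q = ({toRHat (some x), toRHat (some y)} : Set RHat)ᶜ ∧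
      (∀ W : QHat, toRHat W ∈ P ↔ 0 < Dt W (some x) * Dt W (some y)) ∧
      (∀ W : QHat, toRHat W ∈ Q ↔ Dt W (some x) * Dt W (some y) < 0) := by
  have hxyR : (x : ℝ) < (y : ℝ) := by exact_mod_cast hxy
  set P : Set RHat :=
    insert OnePoint.infty (OnePoint.some '' (Set.Iio (x : ℝ) ∪ Set.Ioi (y : ℝ))) with hPdef
  set Q : Set RHat := OnePoint.some '' Set.Ioo (x : ℝ) (y : ℝ) with hQdef
  have hmemP : ∀ t : ℝ, (OnePoint.some t ∈ P ↔ (t < (x : ℝ) ∨ (y : ℝ) < t)) := by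
    intro t
    rw [hPdef]
    constructor
    · rintro (h | ⟨u, hu, h⟩)
      · exact absurd h (Option.some_ne_none _)
      · have := Option.some_injective _ h
        subst this
        exact hu
    · intro h
      exact Set.mem_insert_iff.mpr (Or.inr ⟨t, h, rfl⟩)
  have hinfP : OnePoint.infty ∈ P := Set.mem_insert _ _
  have hmemQ : ∀ t : ℝ, (OnePoint.some t ∈ Q ↔ ((x : ℝ) < t ∧ t < (y : ℝ))) := by
    intro t
    rw [hQdef]
    constructor
    · rintro ⟨u, hu, h⟩
      have := Option.some_injective _ h
      subst this
      exact hu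
    · intro h
      exact ⟨t, h, rfl⟩
  have hinfQ : OnePoint.infty ∉ Q := by
    rintro ⟨u, hu, h⟩
    exact Option.some_ne_none _ h
  refine ⟨P, Q, ?_, ?_, ?_, ?_, ?_, ?_, ?_, ?_⟩
  · -- open P
    have hPeq : P = (OnePoint.some '' Set.Icc (x : ℝ) (y : ℝ))ᶜ := by
      ext z
      cases z using OnePoint.rec with
      | infty =>
        simp only [Set.mem_compl_iff]
        constructor
        · rintro _ ⟨u, _, h⟩
          exact Option.some_ne_none _ h
        · intro _
          exact hinfP
      | coe t =>
        rw [hmemP t]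
        simp only [Set.mem_compl_iff, Set.mem_image, Set.mem_Icc]
        constructor
        · rintro h ⟨u, hu, h'⟩
          have := Option.some_injective _ h'
          subst this
          rcases h with h | h
          · linarith [hu.1]
          · linarith [hu.2]
        · intro h
          rcases lt_or_ge t (x : ℝ) with h' | h'
          · exact Or.inl h'
          · rcases le_or_gt t (y : ℝ) with h'' | h''
            · exact absurd ⟨t, ⟨h', h''⟩, rfl⟩ h
            · exact Or.inr h''
    rw [hPeq]
    exact ((isCompact_Icc.image OnePoint.continuous_coe).isClosed).isOpen_compl
  · exact OnePoint.isOpenEmbedding_coe.isOpenMap _ isOpen_Ioo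
  · -- preconnected P
    have hsplit : P = (OnePoint.some '' Set.Iio (x : ℝ) ∪ {OnePoint.infty}) ∪
        (OnePoint.some '' Set.Ioi (y : ℝ) ∪ {OnePoint.infty}) := by
      rw [hPdef, Set.image_union]
      ext z
      simp only [Set.mem_insert_iff, Set.mem_union, Set.mem_singleton_iff]
      tauto
    rw [hsplit]
    apply IsPreconnected.union OnePoint.infty (Or.inr rfl) (Or.inr rfl)
    · apply IsPreconnected.subset_closure
        (isPreconnected_Iio.image _ OnePoint.continuous_coe.continuousOn)
        Set.subset_union_left
      rintro z (hz | hz)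
      · exact subset_closure hz
      · rw [hz]
        exact infty_mem_closure_Iio (x : ℝ)
    · apply IsPreconnected.subset_closure
        (isPreconnected_Ioi.image _ OnePoint.continuous_coe.continuousOn)
        Set.subset_union_left
      rintro z (hz | hz)
      · exact subset_closure hz
      · rw [hz]
        exact infty_mem_closure_Ioi (y : ℝ)
  · exact isPreconnected_Ioo.image _ OnePoint.continuous_coe.continuousOn
  · -- disjoint
    apply Set.eq_empty_iff_forall_notMem.mpr
    rintro z ⟨hzP, hzQ⟩
    cases z using OnePoint.rec with
    | infty => exact hinfQ hzQ
    | coe t =>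
      rcases (hmemP t).mp hzP with h | h <;>
        rcases (hmemQ t).mp hzQ with ⟨h1, h2⟩ <;> linarith
  · -- union
    ext z
    cases z using OnePoint.rec with
    | infty =>
      simp only [Set.mem_union, Set.mem_compl_iff, Set.mem_insert_iff, Set.mem_singleton_iff,
        toRHat_some]
      constructor
      · rintro _ (h | h) <;> exact Option.some_ne_none _ h.symm
      · intro _
        exact Or.inl hinfP
    | coe t =>
      simp only [Set.mem_union, Set.mem_compl_iff, Set.mem_insert_iff, Set.mem_singleton_iff,
        toRHat_some]
      rw [hmemP t, hmemQ t]
      constructor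
      · intro h
        rintro (h' | h')
        · have := Option.some_injective _ h'
          subst this
          rcases h with (h | h) | ⟨h1, h2⟩ <;> linarith
        · have := Option.some_injective _ h'
          subst this
          rcases h with (h | h) | ⟨h1, h2⟩ <;> linarith
      · intro h
        have hne1 : t ≠ (x : ℝ) := fun h' => h (Or.inl (by rw [h']))
        have hne2 : t ≠ (y : ℝ) := fun h' => h (Or.inr (by rw [h']))
        rcases lt_trichotomy t (x : ℝ) with h' | h' | h'
        · exact Or.inl (Or.inl h')
        · exact absurd h' hne1
        · rcases lt_trichotomy t (y : ℝ) with h'' | h'' | h''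
          · exact Or.inr ⟨h', h''⟩
          · exact absurd h'' hne2
          · exact Or.inl (Or.inr h'')
  · -- membership characterization for P
    intro W
    rcases W with _ | w
    · have hdx : (0:ℤ) < (x.den : ℤ) := by exact_mod_cast x.pos
      have hdy : (0:ℤ) < (y.den : ℤ) := by exact_mod_cast y.pos
      have hDt : Dt none (some x) * Dt none (some y) = (x.den : ℤ) * (y.den : ℤ) := by
        delta Dt qnum qden
        simp only [Option.elim]
        ring
      rw [toRHat_none, hDt]
      exact ⟨fun _ => mul_pos hdx hdy, fun _ => hinfP⟩
    · rw [toRHat_some, hmemP (w : ℝ)]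
      constructor
      · rintro (h | h)
        · have hwx : w < x := by exact_mod_cast h
          have h1 : Dt (some w) (some x) < 0 := (dt_neg w x).mpr hwx
          have h2 : Dt (some w) (some y) < 0 := (dt_neg w y).mpr (lt_trans hwx hxy)
          exact mul_pos_of_neg_of_neg h1 h2
        · have hwy : y < w := by exact_mod_cast h
          have h1 : 0 < Dt (some w) (some x) := (dt_pos w x).mpr (lt_trans hxy hwy)
          have h2 : 0 < Dt (some w) (some y) := (dt_pos w y).mpr hwy
          exact mul_pos h1 h2
      · intro h
        rcases lt_trichotomy w x with h1 | h1 | h1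
        · exact Or.inl (by exact_mod_cast h1)
        · subst h1
          rw [dt_self] at h
          norm_num at h
        · rcases lt_trichotomy w y with h2 | h2 | h2
          · exfalso
            have hp : 0 < Dt (some w) (some x) := (dt_pos w x).mpr h1
            have hn : Dt (some w) (some y) < 0 := (dt_neg w y).mpr h2
            nlinarith
          · subst h2
            rw [dt_self, mul_zero] at h
            norm_num at h
          · exact Or.inr (by exact_mod_cast h2)
  · -- membership characterization for Q
    intro W
    rcases W with _ | w
    · have hdx : (0:ℤ) < (x.den : ℤ) := by exact_mod_cast x.pos
      have hdy : (0:ℤ) < (y.den : ℤ) := by exact_mod_cast y.pos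
      have hDt : Dt none (some x) * Dt none (some y) = (x.den : ℤ) * (y.den : ℤ) := by
        delta Dt qnum qden
        simp only [Option.elim]
        ring
      rw [toRHat_none, hDt]
      constructor
      · intro h
        exact absurd h hinfQ
      · intro h
        nlinarith
    · rw [toRHat_some, hmemQ (w : ℝ)]
      constructor
      · rintro ⟨h1', h2'⟩
        have hwx : x < w := by exact_mod_cast h1'
        have hwy : w < y := by exact_mod_cast h2'
        have h1 : 0 < Dt (some w) (some x) := (dt_pos w x).mpr hwx
        have h2 : Dt (some w) (some y) < 0 := (dt_neg w y).mpr hwy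
        exact mul_neg_of_pos_of_neg h1 h2
      · intro h
        rcases lt_trichotomy w x with h1 | h1 | h1
        · exfalso
          have hn1 : Dt (some w) (some x) < 0 := (dt_neg w x).mpr h1
          have hn2 : Dt (some w) (some y) < 0 := (dt_neg w y).mpr (lt_trans h1 hxy)
          nlinarith
        · subst h1
          rw [dt_self] at h
          norm_num at h
        · rcases lt_trichotomy w y with h2 | h2 | h2
          · exact ⟨by exact_mod_cast h1, by exact_mod_cast h2⟩
          · subst h2
            rw [dt_self, mul_zero] at h
            norm_num at h
          · exfalso
            have hp1 : 0 < Dt (some w) (some x) := (dt_pos w x).mpr h1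
            have hp2 : 0 < Dt (some w) (some y) := (dt_pos w y).mpr h2
            nlinarith


/-- the circle minus a Farey edge consists of two open connected arcs, on which
rational points are characterized by the sign of the determinant product -/
lemma arcs (X Y : QHat) (hne : X ≠ Y) :
    ∃ P Q : Set RHat, IsOpen P ∧ IsOpen Q ∧ IsPreconnected P ∧ IsPreconnected Q ∧
      P ∩ Q = ∅ ∧ P ∪ Q = ({toRHat X, toRHat Y} : Set RHat)ᶜ ∧
      (∀ W : QHat, toRHat W ∈ P ↔ 0 < Dt W X * Dt W Y) ∧
      (∀ W : QHat, toRHat W ∈ Q ↔ Dt W X * Dt W Y < 0) := by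
  cases X with
  | none =>
    cases Y with
    | none => exact absurd rfl hne
    | some y => exact arcs_infty y
  | some x =>
    cases Y with
    | none =>
      obtain ⟨P, Q, h1, h2, h3, h4, h5, h6, h7, h8⟩ := arcs_infty x
      refine ⟨P, Q, h1, h2, h3, h4, h5, ?_, ?_, ?_⟩
      · rw [h6, Set.pair_comm]
      · intro W; rw [h7 W, mul_comm]
      · intro W; rw [h8 W, mul_comm]
    | some y =>
      rcases lt_trichotomy x y with h | h | h
      · exact arcs_fin x y h
      · exact absurd (by rw [h]) hne
      · obtain ⟨P, Q, h1, h2, h3, h4, h5, h6, h7, h8⟩ := arcs_fin y x h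
        refine ⟨P, Q, h1, h2, h3, h4, h5, ?_, ?_, ?_⟩
        · rw [h6, Set.pair_comm]
        · intro W; rw [h7 W, mul_comm]
        · intro W; rw [h8 W, mul_comm]

/-- characterization of the connected component of `Z` in the complement of a Farey edge -/
lemma arc_char (X Y Z : QHat) (hne : X ≠ Y) (hZX : Z ≠ X) (hZY : Z ≠ Y)
    (A : Set RHat)
    (hA : A = connectedComponentIn (({toRHat X, toRHat Y} : Set RHat)ᶜ) (toRHat Z)) :
    IsOpen A ∧
    (∀ W : QHat, (toRHat W ∈ A ↔ 0 < (Dt W X * Dt W Y) * (Dt Z X * Dt Z Y))) ∧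
    (∀ W : QHat, toRHat W ∈ closure A → W = X ∨ W = Y ∨ toRHat W ∈ A) := by
  obtain ⟨P, Q, hPo, hQo, hPc, hQc, hPQ, hPQU, hPm, hQm⟩ := arcs X Y hne
  have hZc : toRHat Z ∈ ({toRHat X, toRHat Y} : Set RHat)ᶜ := by
    simp only [Set.mem_compl_iff, Set.mem_insert_iff, Set.mem_singleton_iff]
    rintro (h | h)
    · exact hZX (toRHat_inj h)
    · exact hZY (toRHat_inj h)
  have hZ1 : Dt Z X ≠ 0 := fun h => hZX (Dt_eq_zero_iff.mp h)
  have hZ2 : Dt Z Y ≠ 0 := fun h => hZY (Dt_eq_zero_iff.mp h)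
  have hPQdisj : Disjoint P Q := Set.disjoint_iff_inter_eq_empty.mpr hPQ
  rcases lt_trichotomy (Dt Z X * Dt Z Y) 0 with hsZ | hsZ | hsZ
  · -- A = Q
    have hZQ : toRHat Z ∈ Q := (hQm Z).mpr hsZ
    have hAQ : A = Q := by
      rw [hA]
      apply le_antisymm
      · apply (isPreconnected_connectedComponentIn).subset_right_of_subset_union hPo hQo
          hPQdisj (by rw [hPQU]; exact connectedComponentIn_subset _ _)
        exact ⟨toRHat Z, mem_connectedComponentIn hZc, hZQ⟩
      · exact hQc.subset_connectedComponentIn hZQ (by rw [← hPQU]; exact Set.subset_union_right)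
    refine ⟨by rw [hAQ]; exact hQo, ?_, ?_⟩
    · intro W
      rw [hAQ, hQm W]
      constructor
      · intro h
        have hW2 : Dt W X * Dt W Y ≠ 0 := by intro h0; rw [h0] at h; norm_num at h
        nlinarith
      · intro h
        nlinarith [mul_pos_of_neg_of_neg hsZ hsZ]
    · intro W hW
      by_cases h1 : W = X
      · exact Or.inl h1
      by_cases h2 : W = Y
      · exact Or.inr (Or.inl h2)
      refine Or.inr (Or.inr ?_)
      have hclP : closure A ⊆ Pᶜ := by
        rw [hAQ]
        apply closure_minimal _ hPo.isClosed_compl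
        intro z hz hzP
        exact Set.eq_empty_iff_forall_notMem.mp hPQ z ⟨hzP, hz⟩
      have hWc : toRHat W ∈ ({toRHat X, toRHat Y} : Set RHat)ᶜ := by
        simp only [Set.mem_compl_iff, Set.mem_insert_iff, Set.mem_singleton_iff]
        rintro (h | h)
        · exact h1 (toRHat_inj h)
        · exact h2 (toRHat_inj h)
      rw [← hPQU] at hWc
      rcases hWc with hWP | hWQ
      · exact absurd hWP (hclP hW)
      · rw [hAQ]; exact hWQ
  · exact absurd hsZ (mul_ne_zero hZ1 hZ2)
  · -- A = P
    have hZP : toRHat Z ∈ P := (hPm Z).mpr hsZ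
    have hAP : A = P := by
      rw [hA]
      apply le_antisymm
      · apply (isPreconnected_connectedComponentIn).subset_left_of_subset_union hPo hQo
          hPQdisj (by rw [hPQU]; exact connectedComponentIn_subset _ _)
        exact ⟨toRHat Z, mem_connectedComponentIn hZc, hZP⟩
      · exact hPc.subset_connectedComponentIn hZP (by rw [← hPQU]; exact Set.subset_union_left)
    refine ⟨by rw [hAP]; exact hPo, ?_, ?_⟩
    · intro W
      rw [hAP, hPm W]
      constructor
      · intro h
        nlinarith
      · intro h
        have hW2 : Dt W X * Dt W Y ≠ 0 := by
          intro h0; rw [h0] at h; norm_num at h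
        nlinarith
    · intro W hW
      by_cases h1 : W = X
      · exact Or.inl h1
      by_cases h2 : W = Y
      · exact Or.inr (Or.inl h2)
      refine Or.inr (Or.inr ?_)
      have hclQ : closure A ⊆ Qᶜ := by
        rw [hAP]
        apply closure_minimal _ hQo.isClosed_compl
        intro z hz hzQ
        exact Set.eq_empty_iff_forall_notMem.mp hPQ z ⟨hz, hzQ⟩
      have hWc : toRHat W ∈ ({toRHat X, toRHat Y} : Set RHat)ᶜ := by
        simp only [Set.mem_compl_iff, Set.mem_insert_iff, Set.mem_singleton_iff]
        rintro (h | h)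
        · exact h1 (toRHat_inj h)
        · exact h2 (toRHat_inj h)
      rw [← hPQU] at hWc
      rcases hWc with hWP | hWQ
      · rw [hAP]; exact hWP
      · exact absurd hWQ (hclQ hW)

/-- Let `(X,Y)` be a Farey edge with opposite vertices `Z, Z'`,
`Z` in the open arc `A` of `ℝ̂ ∖ {X,Y}` and `Z'` in the other arc. If `|φ(X)| > 2`,
`|φ(Y)| > 2` and `|φ(Z)| ≥ |φ(Z')|`, then `|φ(W)| ≥ min(|φ(X)|, |φ(Y)|)` for every
`W ∈ ℚ̂` in the closure of `A`, and `ℰ(φ) ∩ A = ∅`. -/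
theorem tail_of_edge (κ : ℂ) (hκ : κ ≠ 2) (φ : QHat → ℂ) (hφ : IsFricke κ φ)
    (X Y Z Z' : QHat) (hT : FareyTriangle X Y Z) (hT' : FareyTriangle X Y Z')
    (hZZ' : Z ≠ Z') (A : Set RHat)
    (hA : A = connectedComponentIn (({toRHat X, toRHat Y} : Set RHat)ᶜ) (toRHat Z))
    (hZ'A : toRHat Z' ∉ A)
    (hX : 2 < ‖φ X‖) (hY : 2 < ‖φ Y‖)
    (hZ : ‖φ Z'‖ ≤ ‖φ Z‖) :
    (∀ W : QHat, toRHat W ∈ closure A →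
      min (‖φ X‖) (‖φ Y‖) ≤ ‖φ W‖) ∧
    endInvs φ ∩ A = ∅ := by
  obtain ⟨hXY, hYZ, hXZ⟩ := hT
  obtain ⟨hXY', hYZ', hXZ'⟩ := hT'
  have hneXY : X ≠ Y := nbr_ne hXY
  have hZX : Z ≠ X := (nbr_ne hXZ).symm
  have hZY : Z ≠ Y := (nbr_ne hYZ).symm
  obtain ⟨hAopen, hAmem, hAcl⟩ := arc_char X Y Z hneXY hZX hZY A hA
  have hopp : Dt Z' X * Dt Z' Y = -(Dt Z X * Dt Z Y) := sf_opp hXY hXZ hYZ hXZ' hYZ' hZZ'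
  have hedge : φ Z + φ Z' = φ X * φ Y := hφ.2 X Y Z Z' ⟨hXY, hYZ, hXZ⟩ ⟨hXY', hYZ', hXZ'⟩ hZZ'
  have hZprod : ‖φ X‖ * ‖φ Y‖ ≤ 2 * ‖φ Z‖ := by
    have h1 : ‖φ X * φ Y‖ ≤ ‖φ Z‖ + ‖φ Z'‖ := by
      rw [← hedge]
      exact norm_add_le _ _
    rw [norm_mul] at h1
    linarith
  have hZ2 : 2 < ‖φ Z‖ := by nlinarith
  have hZgeY : ‖φ Y‖ ≤ ‖φ Z‖ := by nlinarith
  have hZgeX : ‖φ X‖ ≤ ‖φ Z‖ := by nlinarith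
  have key : ∀ W : QHat, 0 < (Dt W X * Dt W Y) * (Dt Z X * Dt Z Y) →
      min (‖φ X‖) (‖φ Y‖) ≤ ‖φ W‖ := by
    intro W hside
    by_cases hWZ : W = Z
    · rw [hWZ]
      exact le_trans (min_le_right _ _) hZgeY
    · rcases descent X Y Z W hXY hXZ hYZ hside hWZ with ⟨hs1, _⟩ | ⟨hs2, _⟩
      · have hg := grow κ φ hφ ((Dt W X).natAbs + (Dt W Z).natAbs) X Z Y W
          hXZ hXY (nbr_symm hYZ) hs1 le_rfl hX hZ2 (le_trans hZgeY (le_max_right _ _))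
        have l1 := min_le_left (‖φ X‖) (‖φ Y‖)
        have l2 := le_max_left (‖φ X‖) (‖φ Z‖)
        linarith
      · have hg := grow κ φ hφ ((Dt W Z).natAbs + (Dt W Y).natAbs) Z Y X W
          (nbr_symm hYZ) (nbr_symm hXZ) (nbr_symm hXY) hs2 le_rfl hZ2 hY
          (le_trans hZgeX (le_max_left _ _))
        have l1 := min_le_right (‖φ X‖) (‖φ Y‖)
        have l2 := le_max_right (‖φ Z‖) (‖φ Y‖)
        linarith
  constructor
  · intro W hWcl
    rcases hAcl W hWcl with rfl | rfl | hWA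
    · exact min_le_left _ _
    · exact min_le_right _ _
    · exact key W ((hAmem W).mp hWA)
  · rw [Set.eq_empty_iff_forall_notMem]
    rintro lam ⟨hlamE, hlamA⟩
    obtain ⟨K, hK, sq, hinj, htend, hbd⟩ := hlamE
    have hev : ∀ᶠ n in atTop, toRHat (sq n) ∈ A := htend (hAopen.mem_nhds hlamA)
    obtain ⟨N₀, hN₀⟩ := eventually_atTop.mp hev
    have hμ2 : 2 < min (‖φ X‖) (‖φ Y‖) := lt_min hX hY
    set μ := min (‖φ X‖) (‖φ Y‖) with hμdef
    have hδ : 0 < μ * (μ - 2) := mul_pos (by linarith) (by linarith)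
    have harch : ∀ c : ℝ, ∃ n : ℕ, K ≤ c + n * (μ * (μ - 2)) := by
      intro c
      obtain ⟨n, hn⟩ := exists_nat_ge ((K - c) / (μ * (μ - 2)))
      refine ⟨n, ?_⟩
      rw [div_le_iff₀ hδ] at hn
      linarith
    obtain ⟨n1, hn1⟩ := harch (max (‖φ X‖) (‖φ Z‖))
    obtain ⟨n2, hn2⟩ := harch (max (‖φ Z‖) (‖φ Y‖))
    have hfin1 := finite_small κ φ hφ μ hμ2 n1 X Z Y hXZ hXY (nbr_symm hYZ)
      (min_le_left _ _) (le_trans (min_le_right _ _) hZgeY)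
      (le_trans hZgeY (le_max_right _ _)) K hn1
    have hfin2 := finite_small κ φ hφ μ hμ2 n2 Z Y X (nbr_symm hYZ) (nbr_symm hXZ)
      (nbr_symm hXY) (le_trans (min_le_right _ _) hZgeY) (min_le_right _ _)
      (le_trans hZgeX (le_max_left _ _)) K hn2
    have hTfin : {W : QHat | 0 < (Dt W X * Dt W Y) * (Dt Z X * Dt Z Y)
        ∧ ‖φ W‖ ≤ K}.Finite := by
      apply Set.Finite.subset ((hfin1.union hfin2).insert Z)
      rintro W ⟨h1, h2⟩
      by_cases hWZ : W = Z
      · exact Set.mem_insert_iff.mpr (Or.inl hWZ)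
      · rcases descent X Y Z W hXY hXZ hYZ h1 hWZ with ⟨hs1, _⟩ | ⟨hs2, _⟩
        · exact Set.mem_insert_iff.mpr (Or.inr (Set.mem_union_left _ ⟨hs1, h2⟩))
        · exact Set.mem_insert_iff.mpr (Or.inr (Set.mem_union_right _ ⟨hs2, h2⟩))
    have hsub : Set.Ici N₀ ⊆ sq ⁻¹' {W : QHat | 0 < (Dt W X * Dt W Y) * (Dt Z X * Dt Z Y)
        ∧ ‖φ W‖ ≤ K} := by
      intro n hn
      exact ⟨(hAmem (sq n)).mp (hN₀ n hn), hbd n⟩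
    have hpre := hTfin.preimage (Function.Injective.injOn hinj)
    exact Set.Ici_infinite N₀ (hpre.subset hsub)

end TWZ
end
end
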